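/- arXiv:2506.01057 — 2 statements merged into one kernel-verified Lean document; each statement's English description precedes it below -/
import Mathlib

section
/- Let G be a finite connected reduced bipartite graph with partite sets A and B of sizes m and n respectively, where 1 ≤ m ≤ n. Then G admits a (1 + ⌈m/2⌉)-uniform word-representant; in particular, the representation number of G satisfies R(G) ≤ 1 + ⌈m/2⌉. -/
/-- Two distinct letters `a` and `b` alternate in a word `w` if the restriction of `w`
to `{a, b}` has no two consecutive equal letters. -/
def Alternate {V : Type*} [DecidableEq V] (w : List V) (a b : V) : Prop :=
  (w.filter (fun x => x = a ∨ x = b)).Chain' (· ≠ ·)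

/-- A word `w` is a word-representant of a graph `G`: every vertex occurs in `w`, and two
distinct vertices are adjacent iff they alternate in `w`. -/
def Represents {V : Type*} [DecidableEq V] (G : SimpleGraph V) (w : List V) : Prop :=
  (∀ v : V, v ∈ w) ∧ ∀ a b : V, a ≠ b → (G.Adj a b ↔ Alternate w a b)

/-- A word is `k`-uniform if every letter of the alphabet occurs exactly `k` times in it. -/
def IsUniformWord {V : Type*} [DecidableEq V] (w : List V) (k : ℕ) : Prop :=
  ∀ v : V, w.count v = k

/-- `G` is `k`-representable: it has a `k`-uniform word-representant. -/
def Representable {V : Type*} [DecidableEq V] (G : SimpleGraph V) (k : ℕ) : Prop :=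
  ∃ w : List V, Represents G w ∧ IsUniformWord w k

/-- The representation number of `G`: the least `k` such that `G` is `k`-representable. -/
noncomputable def repNumber {V : Type*} [DecidableEq V] (G : SimpleGraph V) : ℕ :=
  sInf {k | Representable G k}

/-- `A` and `B` form a bipartition of `G`: they partition the vertex set and every
edge joins a vertex of `A` to a vertex of `B`. -/
def IsBipartition {V : Type*} [Fintype V] [DecidableEq V] (G : SimpleGraph V) (A B : Finset V) : Prop :=
  A ∪ B = Finset.univ ∧ Disjoint A B ∧
    ∀ a b : V, G.Adj a b → (a ∈ A ∧ b ∈ B) ∨ (a ∈ B ∧ b ∈ A)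

/-- `G` is reduced if no two distinct vertices have the same neighborhood. -/
def Reduced {V : Type*} (G : SimpleGraph V) : Prop :=
  ∀ u v : V, G.neighborSet u = G.neighborSet v → u = v


set_option linter.unusedSectionVars false
set_option linter.unusedVariables false

namespace BipRep
open List

variable {V : Type*} [DecidableEq V] {a b c u v x y : V}

def prd (a b : V) : V → Bool := fun x => decide (x = a ∨ x = b)

lemma alternate_iff (w : List V) (a b : V) :
    Alternate w a b ↔ (w.filter (prd a b)).Chain' (· ≠ ·) := Iff.rfl

@[simp] lemma prd_left : prd a b a = true := by simp [prd]
@[simp] lemma prd_right : prd a b b = true := by simp [prd]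
lemma prd_other (h1 : x ≠ a) (h2 : x ≠ b) : prd a b x = false := by simp [prd, h1, h2]

lemma prd_comm : prd a b = prd b a := funext fun x => by simp [prd, or_comm]

lemma alternate_comm (w : List V) : Alternate w a b ↔ Alternate w b a := by
  rw [alternate_iff, alternate_iff, prd_comm]

lemma filter_prd_nil {l : List V} (ha : a ∉ l) (hb : b ∉ l) : l.filter (prd a b) = [] := by
  rw [List.filter_eq_nil_iff]
  intro x hx
  simp only [prd, decide_eq_true_eq]
  rintro (rfl | rfl) <;> [exact ha hx; exact hb hx]

lemma filter_prd_single {l : List V} (hn : l.Nodup) (ha : a ∈ l) (hb : b ∉ l) :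
    l.filter (prd a b) = [a] := by
  induction l with
  | nil => cases ha
  | cons x t ih =>
    rw [List.nodup_cons] at hn
    by_cases hxa : x = a
    · subst hxa
      rw [List.filter_cons_of_pos prd_left, filter_prd_nil hn.1 (fun h => hb (mem_cons_of_mem _ h))]
    · have hxb : x ≠ b := fun h => hb (h ▸ mem_cons_self)
      rw [List.filter_cons_of_neg (by simp [prd_other hxa hxb])]
      exact ih hn.2 ((List.mem_cons.mp ha).resolve_left (fun h => hxa h.symm))
        (fun h => hb (mem_cons_of_mem _ h))

lemma filter_prd_pair {l : List V} (hn : l.Nodup) (hab : a ≠ b) (ha : a ∈ l) (hb : b ∈ l) :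
    l.filter (prd a b) = [a, b] ∨ l.filter (prd a b) = [b, a] := by
  induction l with
  | nil => cases ha
  | cons x t ih =>
    rw [List.nodup_cons] at hn
    by_cases hxa : x = a
    · subst hxa
      left
      have hbt : b ∈ t := (List.mem_cons.mp hb).resolve_left (fun h => hab h.symm)
      rw [List.filter_cons_of_pos prd_left, prd_comm, filter_prd_single hn.2 hbt hn.1]
    · by_cases hxb : x = b
      · subst hxb
        right
        have hat : a ∈ t := (List.mem_cons.mp ha).resolve_left (fun h => hxa h.symm)
        rw [List.filter_cons_of_pos prd_right, filter_prd_single hn.2 hat hn.1]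
      · rw [List.filter_cons_of_neg (by simp [prd_other hxa hxb])]
        exact ih hn.2 ((List.mem_cons.mp ha).resolve_left (fun h => hxa h.symm))
          ((List.mem_cons.mp hb).resolve_left (fun h => hxb h.symm))

/-- patterns -/
lemma chain'_cons_alt (hab : a ≠ b) :
    ∀ n, Chain' (· ≠ ·) (a :: (List.replicate n [b, a]).flatten) := by
  intro n
  induction n with
  | zero => simp [List.Chain', List.isChain_singleton]
  | succ n ih =>
    rw [List.replicate_succ, List.flatten_cons]
    exact List.isChain_cons_cons.2 ⟨hab, List.isChain_cons_cons.2 ⟨hab.symm, ih⟩⟩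

lemma chain'_alt (hab : b ≠ a) (n : ℕ) :
    Chain' (· ≠ ·) ((List.replicate n [b, a]).flatten) := by
  cases n with
  | zero => simp [List.Chain', List.isChain_nil]
  | succ n =>
    rw [List.replicate_succ, List.flatten_cons]
    exact List.isChain_cons_cons.2 ⟨hab, chain'_cons_alt hab.symm n⟩

lemma cons_repl (i : ℕ) :
    b :: (List.replicate i [a, b]).flatten = (List.replicate i [b, a]).flatten ++ [b] := by
  induction i with
  | zero => simp
  | succ i ih =>
    rw [List.replicate_succ, List.flatten_cons, List.replicate_succ, List.flatten_cons]
    simp [ih]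

lemma edge_pattern (i j : ℕ) :
    [b] ++ (List.replicate i [a, b]).flatten ++ [a, b, a] ++ (List.replicate j [b, a]).flatten
      = (List.replicate (i + j + 2) [b, a]).flatten := by
  have h1 : [b] ++ (List.replicate i [a, b]).flatten = (List.replicate i [b, a]).flatten ++ [b] :=
    cons_repl i
  rw [show i + j + 2 = i + (j + 2) from by omega, List.replicate_add, List.flatten_append]
  rw [show (List.replicate (j+2) [b,a]) = [b,a] :: [b,a] :: List.replicate j [b,a] from rfl]
  simp only [List.flatten_cons, ← List.append_assoc, h1]
  simp

lemma no_chain_of_dup {w : List V} (X Y : List V) (h : w = X ++ a :: a :: Y) :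
    ¬ Chain' (· ≠ ·) w := by
  intro hc
  have h2 : Chain' (· ≠ ·) [a, a] := hc.infix ⟨X, Y, by rw [h]; simp⟩
  exact (List.isChain_pair.mp h2) rfl

lemma force (huv : u ≠ v) :
    ∀ (cs : List (List V)), (∀ c ∈ cs, c = [u, v] ∨ c = [v, u]) →
      Chain' (· ≠ ·) ([v, u] ++ cs.flatten) → ∀ c ∈ cs, c = [v, u] := by
  intro cs
  induction cs with
  | nil => simp
  | cons c cs ih =>
    intro hmem hch
    have hc : c = [v, u] := by
      rcases hmem c (mem_cons_self) with h | h
      · exfalso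
        subst h
        exact no_chain_of_dup (a := u) [v] ([v] ++ cs.flatten) (by simp) hch
      · exact h
    subst hc
    intro c' hc'
    rcases mem_cons.mp hc' with rfl | hc'
    · rfl
    · refine ih (fun d hd => hmem d (mem_cons_of_mem _ hd)) ?_ c' hc'
      have : Chain' (· ≠ ·) (v :: u :: ([v, u] ++ cs.flatten)) := by
        simpa using hch
      exact (this.tail).tail
/-! ### The construction -/

variable (G : SimpleGraph V) [DecidableRel G.Adj]

/-- position class of a `B`-vertex `z` relative to a pair. -/
def bpos (p : V × Option V) (z : V) : ℕ :=
  match p with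
  | (x, some y) =>
      if G.Adj x z then (if G.Adj y z then 2 else 1) else (if G.Adj y z then 3 else 0)
  | (x, none) => if G.Adj x z then 1 else 0

lemma bpos_lt (p : V × Option V) (z : V) : bpos G p z < 4 := by
  obtain ⟨x, _ | y⟩ := p <;> simp only [bpos] <;> split <;> (try split) <;> omega

lemma bpos_lt_none (x : V) (z : V) : bpos G (x, none) z < 2 := by
  simp only [bpos]; split <;> omega

def cf (LB : List V) (p : V × Option V) (i : ℕ) : List V :=
  LB.filter (fun z => decide (bpos G p z = i))

def core (LB : List V) (p : V × Option V) : List V :=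
  match p with
  | (x, some y) =>
      cf G LB (x, some y) 0 ++ [x] ++ cf G LB (x, some y) 1 ++ [y]
        ++ cf G LB (x, some y) 2 ++ [x] ++ cf G LB (x, some y) 3 ++ [y]
  | (x, none) => cf G LB (x, none) 0 ++ [x] ++ cf G LB (x, none) 1 ++ [x]

def rp : V × Option V → List V
  | (x, some y) => [y, x]
  | (x, none) => [x]

def pl : V × Option V → List V
  | (x, some y) => [x, y]
  | (x, none) => [x]

def flatR (ps : List (V × Option V)) : List V := ps.flatMap rp

def letters (ps : List (V × Option V)) : List V := ps.flatMap pl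

def wa (LB : List V) : List (V × Option V) → List V → List V
  | [], _ => []
  | p :: ps, post => (flatR ps ++ core G LB p ++ post) ++ wa LB ps (post ++ rp p)

def chunk2 : List V → List (V × Option V)
  | [] => []
  | [x] => [(x, none)]
  | x :: y :: l => (x, some y) :: chunk2 l

lemma rp_perm_pl (p : V × Option V) : rp p ~ pl p := by
  obtain ⟨x, _ | y⟩ := p
  · rfl
  · exact List.Perm.swap x y []

lemma flatR_perm (ps : List (V × Option V)) : flatR ps ~ letters ps := by
  induction ps with
  | nil => rfl
  | cons p ps ih =>
    simp only [flatR, letters, List.flatMap_cons] at *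
    exact (rp_perm_pl p).append ih

@[simp] lemma letters_cons (p : V × Option V) (ps) :
    letters (p :: ps) = pl p ++ letters ps := by simp [letters]

@[simp] lemma letters_nil : (letters (V := V) []) = [] := rfl

lemma letters_append (ps qs : List (V × Option V)) :
    letters (ps ++ qs) = letters ps ++ letters qs := by simp [letters]

lemma mem_flatR_iff (z : V) (ps) : z ∈ flatR ps ↔ z ∈ letters ps :=
  (flatR_perm ps).mem_iff

lemma chunk2_letters : ∀ l : List V, letters (chunk2 l) = l := by
  intro l
  induction l using chunk2.induct <;> simp_all [chunk2, letters, pl]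

lemma chunk2_length : ∀ l : List V, (chunk2 l).length = (l.length + 1) / 2 := by
  intro l
  induction l using chunk2.induct with
  | case1 => simp [chunk2]
  | case2 x => simp [chunk2]
  | case3 x y l ih => simp [chunk2, ih]; omega

/-- split wa at an occurrence of a pair -/
lemma wa_split (LB : List V) :
    ∀ (P1 : List (V × Option V)) (p : V × Option V) (P2 : List (V × Option V)) (post : List V),
      ∃ W1, wa G LB (P1 ++ p :: P2) post =
        W1 ++ ((flatR P2 ++ core G LB p ++ (post ++ flatR P1))
          ++ wa G LB P2 ((post ++ flatR P1) ++ rp p)) := by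
  intro P1
  induction P1 with
  | nil =>
    intro p P2 post
    exact ⟨[], by simp [wa, flatR]⟩
  | cons q P1 ih =>
    intro p P2 post
    obtain ⟨W1, hW1⟩ := ih p P2 (post ++ rp q)
    refine ⟨(flatR (P1 ++ p :: P2) ++ core G LB q ++ post) ++ W1, ?_⟩
    rw [List.cons_append, wa, hW1]
    simp [flatR, List.flatMap_cons, List.append_assoc]
/-! ### filter computations -/

variable {G} {LB : List V} {b' : V} {p : V × Option V}

lemma mem_core (hz : z ∈ core G LB p) : z ∈ LB ∨ z ∈ pl p := by
  obtain ⟨x, _ | y⟩ := p <;>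
    · simp only [core, cf, pl, List.mem_append, List.mem_filter, List.mem_cons] at hz ⊢
      tauto

lemma cf_filter_ab (hLB : LB.Nodup) (hb : b ∈ LB) (ha : a ∉ LB) (p : V × Option V) (i : ℕ) :
    (cf G LB p i).filter (prd a b) = if bpos G p b = i then [b] else [] := by
  by_cases hi : bpos G p b = i
  · rw [if_pos hi, prd_comm]
    exact filter_prd_single (hLB.filter _)
      (List.mem_filter.2 ⟨hb, by simp [hi]⟩)
      (fun h => ha (List.mem_of_mem_filter h))
  · rw [if_neg hi]
    refine filter_prd_nil (fun h => ha (List.mem_of_mem_filter h)) (fun h => ?_)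
    have := (List.mem_filter.1 h).2
    simp only [decide_eq_true_eq] at this
    exact hi this

lemma cf_filter_bb (hLB : LB.Nodup) (hb : b ∈ LB) (hb' : b' ∈ LB) (hne : b ≠ b')
    (p : V × Option V) (i : ℕ) :
    (cf G LB p i).filter (prd b b') =
      if bpos G p b = i then (if bpos G p b' = i then LB.filter (prd b b') else [b])
      else (if bpos G p b' = i then [b'] else []) := by
  by_cases h1 : bpos G p b = i <;> by_cases h2 : bpos G p b' = i <;>
    simp only [h1, h2, if_pos, if_neg, if_true, if_false]
  · rw [cf, List.filter_filter]
    refine List.filter_congr (fun z hz => ?_)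
    by_cases hp : prd b b' z = true
    · have : z = b ∨ z = b' := by simpa [prd] using hp
      rcases this with rfl | rfl <;> simp [hp, h1, h2]
    · simp only [Bool.not_eq_true] at hp
      simp [hp]
  · exact filter_prd_single (hLB.filter _) (List.mem_filter.2 ⟨hb, by simp [h1]⟩)
      (fun h => h2 (by simpa using (List.mem_filter.1 h).2))
  · rw [prd_comm]
    exact filter_prd_single (hLB.filter _) (List.mem_filter.2 ⟨hb', by simp [h2]⟩)
      (fun h => h1 (by simpa using (List.mem_filter.1 h).2))
  · refine filter_prd_nil (fun h => h1 (by simpa using (List.mem_filter.1 h).2))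
      (fun h => h2 (by simpa using (List.mem_filter.1 h).2))

lemma core_filter_nil (ha : a ∉ LB) (hc : c ∉ LB) (hpa : a ∉ pl p) (hpc : c ∉ pl p) :
    (core G LB p).filter (prd a c) = [] :=
  filter_prd_nil (fun h => (mem_core h).elim ha hpa) (fun h => (mem_core h).elim hc hpc)

lemma core_filter_b (hLB : LB.Nodup) (hb : b ∈ LB) (ha : a ∉ LB)
    (hpa : a ∉ pl p) (hpb : b ∉ pl p) :
    (core G LB p).filter (prd a b) = [b] := by
  obtain ⟨x, _ | y⟩ := p
  · simp only [pl, List.mem_singleton] at hpa hpb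
    have hx : prd a b x = false := prd_other (Ne.symm hpa) (Ne.symm hpb)
    have h2 := bpos_lt_none G x b
    simp only [core, List.filter_append, cf_filter_ab hLB hb ha,
      List.filter_cons, hx, cond_false, List.filter_nil]
    have : bpos G (x, none) b = 0 ∨ bpos G (x, none) b = 1 := by omega
    rcases this with h | h <;> simp [h]
  · simp only [pl, List.mem_cons, List.mem_singleton, List.not_mem_nil, or_false, not_or] at hpa hpb
    have hx : prd a b x = false := prd_other (Ne.symm hpa.1) (Ne.symm hpb.1)
    have hy : prd a b y = false := prd_other (Ne.symm hpa.2) (Ne.symm hpb.2)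
    have h4 := bpos_lt G (x, some y) b
    simp only [core, List.filter_append, cf_filter_ab hLB hb ha,
      List.filter_cons, hx, hy, cond_false, List.filter_nil]
    have : bpos G (x, some y) b = 0 ∨ bpos G (x, some y) b = 1 ∨
        bpos G (x, some y) b = 2 ∨ bpos G (x, some y) b = 3 := by omega
    rcases this with h | h | h | h <;> simp [h]

lemma core_filter_pair (hxy : x ≠ y) (hx : x ∉ LB) (hy : y ∉ LB) :
    (core G LB (x, some y)).filter (prd x y) = [x, y, x, y] := by
  have hcf : ∀ i, (cf G LB (x, some y) i).filter (prd x y) = [] := fun i =>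
    filter_prd_nil (fun h => hx (List.mem_of_mem_filter h))
      (fun h => hy (List.mem_of_mem_filter h))
  simp [core, List.filter_append, hcf, List.filter_cons, prd_left, prd_right]

lemma core_filter_dup_other (ha : a ∈ pl p) (hc : c ∉ pl p) (haLB : a ∉ LB) (hcLB : c ∉ LB)
    (hnd : (pl p).Nodup) :
    ∃ u v, (core G LB p).filter (prd a c) = u ++ a :: a :: v := by
  have hcf : ∀ i, (cf G LB p i).filter (prd a c) = [] := fun i =>
    filter_prd_nil (fun h => haLB (List.mem_of_mem_filter h))
      (fun h => hcLB (List.mem_of_mem_filter h))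
  obtain ⟨x, _ | y⟩ := p
  · simp only [pl, List.mem_singleton] at ha hc
    subst ha
    refine ⟨[], [], ?_⟩
    simp [core, List.filter_append, hcf, List.filter_cons, prd_left]
  · simp only [pl, List.mem_cons, List.mem_singleton, List.not_mem_nil, or_false, not_or] at ha hc
    have hxy : x ≠ y := fun h => by simp [pl, h] at hnd
    rcases ha with rfl | rfl
    · have hy : prd a c y = false := prd_other (hxy.symm) (Ne.symm hc.2)
      refine ⟨[], [], ?_⟩
      simp [core, List.filter_append, hcf, List.filter_cons, prd_left, hy]
    · have hx : prd a c x = false := prd_other hxy (Ne.symm hc.1)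
      refine ⟨[], [], ?_⟩
      simp [core, List.filter_append, hcf, List.filter_cons, prd_left, hx]

lemma core_filter_edge (hLB : LB.Nodup) (hb : b ∈ LB) (ha : a ∉ LB)
    (hmem : a ∈ pl p) (hbp : b ∉ pl p) (hnd : (pl p).Nodup) (hadj : G.Adj a b) :
    (core G LB p).filter (prd a b) = [a, b, a] := by
  obtain ⟨x, _ | y⟩ := p
  · simp only [pl, List.mem_singleton] at hmem hbp
    subst hmem
    have hpos : bpos G (a, none) b = 1 := by simp [bpos, hadj]
    simp [core, List.filter_append, cf_filter_ab hLB hb ha, hpos, List.filter_cons, prd_left]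
  · simp only [pl, List.mem_cons, List.mem_singleton, List.not_mem_nil, or_false, not_or] at hmem hbp
    have hxy : x ≠ y := fun h => by simp [pl, h] at hnd
    rcases hmem with rfl | rfl
    · have hy : prd a b y = false := prd_other (hxy.symm) (Ne.symm hbp.2)
      by_cases hyb : G.Adj y b
      · have hpos : bpos G (a, some y) b = 2 := by simp [bpos, hadj, hyb]
        simp [core, List.filter_append, cf_filter_ab hLB hb ha, hpos,
          List.filter_cons, prd_left, hy]
      · have hpos : bpos G (a, some y) b = 1 := by simp [bpos, hadj, hyb]
        simp [core, List.filter_append, cf_filter_ab hLB hb ha, hpos,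
          List.filter_cons, prd_left, hy]
    · have hx : prd a b x = false := prd_other hxy (Ne.symm hbp.1)
      by_cases hxb : G.Adj x b
      · have hpos : bpos G (x, some a) b = 2 := by simp [bpos, hadj, hxb]
        simp [core, List.filter_append, cf_filter_ab hLB hb ha, hpos,
          List.filter_cons, prd_left, hx]
      · have hpos : bpos G (x, some a) b = 3 := by simp [bpos, hadj, hxb]
        simp [core, List.filter_append, cf_filter_ab hLB hb ha, hpos,
          List.filter_cons, prd_left, hx]

lemma core_filter_nonedge (hLB : LB.Nodup) (hb : b ∈ LB) (ha : a ∉ LB)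
    (hmem : a ∈ pl p) (hbp : b ∉ pl p) (hnd : (pl p).Nodup) (hadj : ¬ G.Adj a b) :
    ∃ u v, (core G LB p).filter (prd a b) = u ++ a :: a :: v := by
  obtain ⟨x, _ | y⟩ := p
  · simp only [pl, List.mem_singleton] at hmem hbp
    subst hmem
    have hpos : bpos G (a, none) b = 0 := by simp [bpos, hadj]
    refine ⟨[b], [], ?_⟩
    simp [core, List.filter_append, cf_filter_ab hLB hb ha, hpos, List.filter_cons, prd_left]
  · simp only [pl, List.mem_cons, List.mem_singleton, List.not_mem_nil, or_false, not_or] at hmem hbp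
    have hxy : x ≠ y := fun h => by simp [pl, h] at hnd
    rcases hmem with rfl | rfl
    · have hy : prd a b y = false := prd_other (hxy.symm) (Ne.symm hbp.2)
      by_cases hyb : G.Adj y b
      · have hpos : bpos G (a, some y) b = 3 := by simp [bpos, hadj, hyb]
        refine ⟨[], [b], ?_⟩
        simp [core, List.filter_append, cf_filter_ab hLB hb ha, hpos,
          List.filter_cons, prd_left, hy]
      · have hpos : bpos G (a, some y) b = 0 := by simp [bpos, hadj, hyb]
        refine ⟨[b], [], ?_⟩
        simp [core, List.filter_append, cf_filter_ab hLB hb ha, hpos,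
          List.filter_cons, prd_left, hy]
    · have hx : prd a b x = false := prd_other hxy (Ne.symm hbp.1)
      by_cases hxb : G.Adj x b
      · have hpos : bpos G (x, some a) b = 1 := by simp [bpos, hadj, hxb]
        refine ⟨[b], [], ?_⟩
        simp [core, List.filter_append, cf_filter_ab hLB hb ha, hpos,
          List.filter_cons, prd_left, hx]
      · have hpos : bpos G (x, some a) b = 0 := by simp [bpos, hadj, hxb]
        refine ⟨[b], [], ?_⟩
        simp [core, List.filter_append, cf_filter_ab hLB hb ha, hpos,
          List.filter_cons, prd_left, hx]

lemma core_filter_bb (hLB : LB.Nodup) (hb : b ∈ LB) (hb' : b' ∈ LB) (hne : b ≠ b')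
    (hpl : ∀ z ∈ pl p, z ∉ LB) :
    (core G LB p).filter (prd b b') =
      if bpos G p b = bpos G p b' then LB.filter (prd b b')
      else if bpos G p b < bpos G p b' then [b, b'] else [b', b] := by
  obtain ⟨x, _ | y⟩ := p
  · have hx : prd b b' x = false :=
      prd_other (fun h => hpl x (by simp [pl]) (h ▸ hb)) (fun h => hpl x (by simp [pl]) (h ▸ hb'))
    have h1 := bpos_lt_none G x b
    have h2 := bpos_lt_none G x b'
    simp only [core, List.filter_append, cf_filter_bb hLB hb hb' hne,
      List.filter_cons, hx, cond_false, List.filter_nil]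
    have e1 : bpos G (x, none) b = 0 ∨ bpos G (x, none) b = 1 := by omega
    have e2 : bpos G (x, none) b' = 0 ∨ bpos G (x, none) b' = 1 := by omega
    rcases e1 with h | h <;> rcases e2 with h' | h' <;> simp [h, h']
  · have hx : prd b b' x = false :=
      prd_other (fun h => hpl x (by simp [pl]) (h ▸ hb)) (fun h => hpl x (by simp [pl]) (h ▸ hb'))
    have hy : prd b b' y = false :=
      prd_other (fun h => hpl y (by simp [pl]) (h ▸ hb)) (fun h => hpl y (by simp [pl]) (h ▸ hb'))
    have h1 := bpos_lt G (x, some y) b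
    have h2 := bpos_lt G (x, some y) b'
    simp only [core, List.filter_append, cf_filter_bb hLB hb hb' hne,
      List.filter_cons, hx, hy, cond_false, List.filter_nil]
    have e1 : bpos G (x, some y) b = 0 ∨ bpos G (x, some y) b = 1 ∨
        bpos G (x, some y) b = 2 ∨ bpos G (x, some y) b = 3 := by omega
    have e2 : bpos G (x, some y) b' = 0 ∨ bpos G (x, some y) b' = 1 ∨
        bpos G (x, some y) b' = 2 ∨ bpos G (x, some y) b' = 3 := by omega
    rcases e1 with h | h | h | h <;> rcases e2 with h' | h' | h' | h' <;> simp [h, h']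
/-! ### flatR filters -/

lemma flatR_filter_nil {ps : List (V × Option V)} (ha : a ∉ letters ps) (hb : b ∉ letters ps) :
    (flatR ps).filter (prd a b) = [] :=
  filter_prd_nil (fun h => ha ((mem_flatR_iff a ps).1 h)) (fun h => hb ((mem_flatR_iff b ps).1 h))

lemma flatR_filter_single {ps : List (V × Option V)} (hnd : (letters ps).Nodup)
    (ha : a ∈ letters ps) (hb : b ∉ letters ps) :
    (flatR ps).filter (prd a b) = [a] :=
  filter_prd_single ((flatR_perm ps).nodup_iff.2 hnd) ((mem_flatR_iff a ps).2 ha)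
    (fun h => hb ((mem_flatR_iff b ps).1 h))

lemma rp_filter_pair (hxy : x ≠ y) : (rp (x, some y)).filter (prd x y) = [y, x] := by
  simp [rp, List.filter_cons, prd_left, prd_right]

/-! ### wa filters -/

lemma waf_bb (hb : b ∈ LB) (hb' : b' ∈ LB) :
    ∀ (ps : List (V × Option V)) (post : List V),
      (∀ p ∈ ps, ∀ z ∈ pl p, z ∉ LB) → post.filter (prd b b') = [] →
      (wa G LB ps post).filter (prd b b') =
        ps.flatMap (fun p => (core G LB p).filter (prd b b')) := by
  intro ps
  induction ps with
  | nil => intro post _ _; simp [wa]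
  | cons p ps ih =>
    intro post hlet hpost
    have hbl : b ∉ letters ps := fun h => by
      obtain ⟨q, hq, hz⟩ := List.mem_flatMap.1 h
      exact hlet q (List.mem_cons_of_mem _ hq) b hz hb
    have hbl' : b' ∉ letters ps := fun h => by
      obtain ⟨q, hq, hz⟩ := List.mem_flatMap.1 h
      exact hlet q (List.mem_cons_of_mem _ hq) b' hz hb'
    have hrp : (rp p).filter (prd b b') = [] := by
      refine filter_prd_nil (fun h => ?_) (fun h => ?_)
      · exact hlet p (List.mem_cons_self) b ((rp_perm_pl p).mem_iff.1 h) hb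
      · exact hlet p (List.mem_cons_self) b' ((rp_perm_pl p).mem_iff.1 h) hb'
    rw [wa, List.filter_append, List.filter_append, List.filter_append,
      flatR_filter_nil hbl hbl', hpost,
      ih (post ++ rp p) (fun q hq => hlet q (List.mem_cons_of_mem _ hq))
        (by simp [List.filter_append, hpost, hrp])]
    simp [List.flatMap_cons]

lemma waf_edge_post (hLB : LB.Nodup) (hb : b ∈ LB) (ha : a ∉ LB) :
    ∀ (ps : List (V × Option V)) (post : List V),
      (∀ p ∈ ps, ∀ z ∈ pl p, z ∉ LB) → a ∉ letters ps → post.filter (prd a b) = [a] →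
      (wa G LB ps post).filter (prd a b) = (List.replicate ps.length [b, a]).flatten := by
  intro ps
  induction ps with
  | nil => intro post _ _ _; simp [wa]
  | cons p ps ih =>
    intro post hlet hal hpost
    have hbl : b ∉ letters ps := fun h => by
      obtain ⟨q, hq, hz⟩ := List.mem_flatMap.1 h
      exact hlet q (List.mem_cons_of_mem _ hq) b hz hb
    have hal' : a ∉ letters ps := fun h => hal (by simp [letters_cons, h])
    have hap : a ∉ pl p := fun h => hal (by simp [letters_cons, h])
    have hbp : b ∉ pl p := fun h => hlet p (List.mem_cons_self) b h hb
    have hrp : (rp p).filter (prd a b) = [] := by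
      refine filter_prd_nil (fun h => hap ((rp_perm_pl p).mem_iff.1 h))
        (fun h => hbp ((rp_perm_pl p).mem_iff.1 h))
    rw [wa, List.filter_append, List.filter_append, List.filter_append,
      flatR_filter_nil hal' hbl, hpost, core_filter_b hLB hb ha hap hbp,
      ih (post ++ rp p) (fun q hq => hlet q (List.mem_cons_of_mem _ hq)) hal'
        (by simp [List.filter_append, hpost, hrp])]
    simp [List.replicate_succ]

lemma waf_edge (hLB : LB.Nodup) (hb : b ∈ LB) (ha : a ∉ LB) (hadj : G.Adj a b) :
    ∀ (Q1 : List (V × Option V)) (pa : V × Option V) (Q2 : List (V × Option V)) (post : List V),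
      (∀ p ∈ Q1 ++ pa :: Q2, ∀ z ∈ pl p, z ∉ LB) →
      (letters (Q1 ++ pa :: Q2)).Nodup →
      a ∈ pl pa → a ∉ letters Q1 → a ∉ letters Q2 →
      post.filter (prd a b) = [] →
      (wa G LB (Q1 ++ pa :: Q2) post).filter (prd a b) =
        (List.replicate Q1.length [a, b]).flatten ++ [a, b, a]
          ++ (List.replicate Q2.length [b, a]).flatten := by
  intro Q1
  induction Q1 with
  | nil =>
    intro pa Q2 post hlet hnd hapa haQ1 haQ2 hpost
    have hbQ2 : b ∉ letters Q2 := fun h => by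
      obtain ⟨q, hq, hz⟩ := List.mem_flatMap.1 h
      exact hlet q (by simp [hq]) b hz hb
    have hbpa : b ∉ pl pa := fun h => hlet pa (by simp) b h hb
    have hndpa : (pl pa).Nodup := by
      rw [List.nil_append, letters_cons] at hnd
      exact hnd.of_append_left
    have hrp : (rp pa).filter (prd a b) = [a] :=
      filter_prd_single ((rp_perm_pl pa).nodup_iff.2 hndpa)
        ((rp_perm_pl pa).mem_iff.2 hapa) (fun h => hbpa ((rp_perm_pl pa).mem_iff.1 h))
    rw [List.nil_append, wa, List.filter_append, List.filter_append, List.filter_append,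
      flatR_filter_nil haQ2 hbQ2, hpost,
      core_filter_edge hLB hb ha hapa hbpa hndpa hadj,
      waf_edge_post hLB hb ha Q2 (post ++ rp pa)
        (fun q hq => hlet q (by simp [hq]) ) haQ2
        (by simp [List.filter_append, hpost, hrp, List.nil_append])]
    simp
  | cons q Q1 ih =>
    intro pa Q2 post hlet hnd hapa haQ1 haQ2 hpost
    have hnd' : (letters (Q1 ++ pa :: Q2)).Nodup := by
      rw [List.cons_append, letters_cons] at hnd
      exact hnd.of_append_right
    have haq : a ∉ pl q := fun h => haQ1 (by simp [letters_cons, h])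
    have haQ1' : a ∉ letters Q1 := fun h => haQ1 (by simp [letters_cons, h])
    have hbq : b ∉ pl q := fun h => hlet q (by simp) b h hb
    have hbrest : b ∉ letters (Q1 ++ pa :: Q2) := fun h => by
      obtain ⟨r, hr, hz⟩ := List.mem_flatMap.1 h
      exact hlet r (by simp [List.mem_append] at hr ⊢; tauto) b hz hb
    have harest : a ∈ letters (Q1 ++ pa :: Q2) := by
      rw [letters_append, letters_cons]
      simp [hapa]
    have hrpq : (rp q).filter (prd a b) = [] :=
      filter_prd_nil (fun h => haq ((rp_perm_pl q).mem_iff.1 h))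
        (fun h => hbq ((rp_perm_pl q).mem_iff.1 h))
    rw [List.cons_append, wa, List.filter_append, List.filter_append, List.filter_append,
      flatR_filter_single hnd' harest hbrest, hpost,
      core_filter_b hLB hb ha haq hbq,
      ih pa Q2 (post ++ rp q) (fun r hr => hlet r (List.mem_cons_of_mem _ hr)) hnd'
        hapa haQ1' haQ2 (by simp [List.filter_append, hpost, hrpq])]
    simp [List.replicate_succ]

/-! ### counts -/

lemma count_one_of_nodup {l : List V} (hn : l.Nodup) (hv : v ∈ l) : l.count v = 1 := by
  have h1 := List.nodup_iff_count_le_one.1 hn v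
  have h2 := List.count_pos_iff.2 hv
  omega

lemma count_cf (hLB : LB.Nodup) (hv : v ∈ LB) (p : V × Option V) (i : ℕ) :
    (cf G LB p i).count v = if bpos G p v = i then 1 else 0 := by
  by_cases hi : bpos G p v = i
  · rw [if_pos hi, cf, List.count_filter (by simp [hi])]
    exact count_one_of_nodup hLB hv
  · rw [if_neg hi, List.count_eq_zero]
    intro h
    exact hi (by simpa using (List.mem_filter.1 h).2)

lemma count_core_b (hLB : LB.Nodup) (hv : v ∈ LB) (hpl : ∀ z ∈ pl p, z ∉ LB) :
    (core G LB p).count v = 1 := by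
  obtain ⟨x, _ | y⟩ := p
  · have hx : x ≠ v := fun h => hpl x (by simp [pl]) (h ▸ hv)
    have h2 := bpos_lt_none G x v
    simp only [core, List.count_append, count_cf hLB hv, List.count_cons, List.count_nil]
    have : bpos G (x, none) v = 0 ∨ bpos G (x, none) v = 1 := by omega
    rcases this with h | h <;> simp [h, hx]
  · have hx : x ≠ v := fun h => hpl x (by simp [pl]) (h ▸ hv)
    have hy : y ≠ v := fun h => hpl y (by simp [pl]) (h ▸ hv)
    have h4 := bpos_lt G (x, some y) v
    simp only [core, List.count_append, count_cf hLB hv, List.count_cons, List.count_nil]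
    have : bpos G (x, some y) v = 0 ∨ bpos G (x, some y) v = 1 ∨
        bpos G (x, some y) v = 2 ∨ bpos G (x, some y) v = 3 := by omega
    rcases this with h | h | h | h <;> simp [h, hx, hy]

lemma count_cf_zero (hvLB : v ∉ LB) (p : V × Option V) (i : ℕ) :
    (cf G LB p i).count v = 0 :=
  List.count_eq_zero.2 (fun h => hvLB (List.mem_of_mem_filter h))

lemma count_core_a (hv : v ∈ pl p) (hvLB : v ∉ LB) (hnd : (pl p).Nodup) :
    (core G LB p).count v = 2 := by
  obtain ⟨x, _ | y⟩ := p
  · simp only [pl, List.mem_singleton] at hv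
    subst hv
    simp [core, List.count_append, count_cf_zero hvLB]
  · have hxy : x ≠ y := fun h => by simp [pl, h] at hnd
    simp only [pl, List.mem_cons, List.mem_singleton, List.not_mem_nil, or_false] at hv
    rcases hv with rfl | rfl <;>
      simp [core, List.count_append, count_cf_zero hvLB, List.count_cons, hxy,
        (Ne.symm hxy)]

lemma count_core_zero (hvLB : v ∉ LB) (hvp : v ∉ pl p) :
    (core G LB p).count v = 0 :=
  List.count_eq_zero.2 (fun h => (mem_core h).elim hvLB hvp)

lemma count_rp_pl (p : V × Option V) : (rp p).count v = (pl p).count v :=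
  (rp_perm_pl p).count_eq v

lemma count_flatR (ps : List (V × Option V)) : (flatR ps).count v = (letters ps).count v :=
  (flatR_perm ps).count_eq v

lemma wac_b (hLB : LB.Nodup) (hv : v ∈ LB) :
    ∀ (ps : List (V × Option V)) (post : List V),
      (∀ p ∈ ps, ∀ z ∈ pl p, z ∉ LB) → post.count v = 0 →
      (wa G LB ps post).count v = ps.length := by
  intro ps
  induction ps with
  | nil => intro post _ _; simp [wa]
  | cons p ps ih =>
    intro post hlet hpost
    have hvl : v ∉ letters ps := fun h => by
      obtain ⟨q, hq, hz⟩ := List.mem_flatMap.1 h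
      exact hlet q (List.mem_cons_of_mem _ hq) v hz hv
    have hvrp : (rp p).count v = 0 := by
      rw [count_rp_pl, List.count_eq_zero]
      exact fun h => hlet p (List.mem_cons_self) v h hv
    rw [wa, List.count_append, List.count_append, List.count_append,
      count_flatR, List.count_eq_zero.2 hvl, count_core_b hLB hv
        (fun z hz => hlet p (List.mem_cons_self) z hz), hpost,
      ih (post ++ rp p) (fun q hq => hlet q (List.mem_cons_of_mem _ hq))
        (by simp [List.count_append, hpost, hvrp])]
    simp [List.length_cons]
    omega

lemma wac_a2 (hvLB : v ∉ LB) :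
    ∀ (ps : List (V × Option V)) (post : List V),
      v ∉ letters ps → post.count v = 1 →
      (wa G LB ps post).count v = ps.length := by
  intro ps
  induction ps with
  | nil => intro post _ _; simp [wa]
  | cons p ps ih =>
    intro post hvl hpost
    have hvp : v ∉ pl p := fun h => hvl (by simp [letters_cons, h])
    have hvl' : v ∉ letters ps := fun h => hvl (by simp [letters_cons, h])
    have hvrp : (rp p).count v = 0 := by
      rw [count_rp_pl, List.count_eq_zero]; exact hvp
    rw [wa, List.count_append, List.count_append, List.count_append,
      count_flatR, List.count_eq_zero.2 hvl', count_core_zero hvLB hvp, hpost,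
      ih (post ++ rp p) hvl' (by simp [List.count_append, hpost, hvrp])]
    simp [Nat.add_comm]

lemma wac_a1 (hvLB : v ∉ LB) :
    ∀ (Q1 : List (V × Option V)) (pa : V × Option V) (Q2 : List (V × Option V)) (post : List V),
      v ∈ pl pa → (pl pa).Nodup → v ∉ letters Q1 → v ∉ letters Q2 → post.count v = 0 →
      (wa G LB (Q1 ++ pa :: Q2) post).count v = Q1.length + 2 + Q2.length := by
  intro Q1
  induction Q1 with
  | nil =>
    intro pa Q2 post hv hnd hQ1 hQ2 hpost
    have hvrp : (rp pa).count v = 1 := by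
      rw [count_rp_pl]
      exact count_one_of_nodup hnd hv
    rw [List.nil_append, wa, List.count_append, List.count_append, List.count_append,
      count_flatR, List.count_eq_zero.2 hQ2, count_core_a hv hvLB hnd, hpost,
      wac_a2 hvLB Q2 (post ++ rp pa) hQ2 (by simp [List.count_append, hpost, hvrp])]
    simp [Nat.add_comm]
  | cons q Q1 ih =>
    intro pa Q2 post hv hnd hQ1 hQ2 hpost
    have hvq : v ∉ pl q := fun h => hQ1 (by simp [letters_cons, h])
    have hQ1' : v ∉ letters Q1 := fun h => hQ1 (by simp [letters_cons, h])
    have hvrest : (letters (Q1 ++ pa :: Q2)).count v = 1 := by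
      rw [letters_append, letters_cons, List.count_append, List.count_append,
        List.count_eq_zero.2 hQ1', List.count_eq_zero.2 hQ2]
      have := count_one_of_nodup hnd hv
      omega
    have hvrpq : (rp q).count v = 0 := by
      rw [count_rp_pl, List.count_eq_zero]; exact hvq
    rw [List.cons_append, wa, List.count_append, List.count_append, List.count_append,
      count_flatR, hvrest, count_core_zero hvLB hvq, hpost,
      ih pa Q2 (post ++ rp q) hv hnd hQ1' hQ2 (by simp [List.count_append, hpost, hvrpq])]
    simp [List.length_cons]
    omega
/-! ### splitting helpers -/

lemma exists_split {P : List (V × Option V)} (hn : (letters P).Nodup) (ha : a ∈ letters P) :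
    ∃ P1 p P2, P = P1 ++ p :: P2 ∧ a ∈ pl p ∧ a ∉ letters P1 ∧ a ∉ letters P2 := by
  induction P with
  | nil => simp at ha
  | cons p ps ih =>
    rw [letters_cons] at hn ha
    rw [List.nodup_append] at hn
    by_cases h : a ∈ pl p
    · exact ⟨[], p, ps, rfl, h, by simp, fun hc => hn.2.2 a h a hc rfl⟩
    · obtain ⟨P1, q, P2, rfl, hq, h1, h2⟩ := ih hn.2.1 ((List.mem_append.1 ha).resolve_left h)
      exact ⟨p :: P1, q, P2, rfl, hq, by
        rw [letters_cons, List.mem_append]; tauto, h2⟩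

lemma split_not_mem {P1 P2 : List (V × Option V)} {pa : V × Option V}
    (hnd : (letters (P1 ++ pa :: P2)).Nodup) (hz : z ∈ pl pa) :
    z ∉ letters P1 ∧ z ∉ letters P2 := by
  rw [letters_append, letters_cons, List.nodup_append] at hnd
  refine ⟨fun hc => hnd.2.2 z hc z (by rw [List.mem_append]; tauto) rfl, fun hc => ?_⟩
  have := hnd.2.1
  rw [List.nodup_append] at this
  exact this.2.2 z hz z hc rfl

lemma map_sum_lt {α : Type*} (l : List α) (f g : α → ℕ) (hne : l ≠ [])
    (h : ∀ x ∈ l, f x < g x) : (l.map f).sum < (l.map g).sum := by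
  cases l with
  | nil => exact absurd rfl hne
  | cons x t =>
    have h1 : f x < g x := h x (List.mem_cons_self)
    have h2 : (t.map f).sum ≤ (t.map g).sum :=
      List.sum_le_sum (fun i hi => le_of_lt (h i (List.mem_cons_of_mem _ hi)))
    simp only [List.map_cons, List.sum_cons]
    omega

/-! ### the B-B case -/

lemma bb_case {β1 β2 : V} {P : List (V × Option V)}
    (hLB : LB.Nodup)
    (hsort : List.Pairwise (fun u v =>
      (P.map (fun p => bpos G p u)).sum ≤ (P.map (fun p => bpos G p v)).sum) LB)
    (hne : β1 ≠ β2) (h1 : β1 ∈ LB) (h2 : β2 ∈ LB)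
    (hfl : LB.filter (prd β1 β2) = [β1, β2])
    (hplP : ∀ p ∈ P, ∀ z ∈ pl p, z ∉ LB) (hPne : P ≠ [])
    (hch : ((LB.reverse ++ wa G LB P []).filter (prd β1 β2)).Chain' (· ≠ ·)) : False := by
  have hrev : (LB.reverse.filter (prd β1 β2)) = [β2, β1] := by
    rw [List.filter_reverse, hfl]
    rfl
  have hwa := waf_bb (G := G) h1 h2 P [] hplP (by simp)
  rw [List.filter_append, hrev, hwa, List.flatMap_def] at hch
  have hmem : ∀ cchunk ∈ P.map (fun p => (core G LB p).filter (prd β1 β2)),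
      cchunk = [β1, β2] ∨ cchunk = [β2, β1] := by
    intro cchunk hc
    obtain ⟨p, hp, rfl⟩ := List.mem_map.1 hc
    rw [core_filter_bb hLB h1 h2 hne (hplP p hp)]
    split_ifs with hco hlt
    · left; exact hfl
    · left; rfl
    · right; rfl
  have hforce := force hne _ hmem hch
  have hlt : ∀ p ∈ P, bpos G p β2 < bpos G p β1 := by
    intro p hp
    have hc := hforce _ (List.mem_map_of_mem hp)
    rw [core_filter_bb hLB h1 h2 hne (hplP p hp)] at hc
    split_ifs at hc with hco hlt
    · rw [hfl] at hc
      exact absurd (by injection hc) hne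
    · exact absurd (by injection hc) hne
    · omega
  have hsum := map_sum_lt P (fun p => bpos G p β2) (fun p => bpos G p β1) hPne hlt
  have hsub : [β1, β2] <+ LB := hfl ▸ List.filter_sublist (l := LB)
  have hpw := List.Pairwise.sublist hsub hsort
  have := (List.pairwise_cons.1 hpw).1 β2 (List.mem_singleton_self _)
  omega
/-! ### main construction, m ≥ 3 -/

lemma main3 {V : Type*} [Fintype V] [DecidableEq V] (G : SimpleGraph V) [DecidableRel G.Adj]
    (A B : Finset V)
    (hAB : A ∪ B = Finset.univ) (hdisj : Disjoint A B)
    (hcross : ∀ a b : V, G.Adj a b → (a ∈ A ∧ b ∈ B) ∨ (a ∈ B ∧ b ∈ A))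
    (hm3 : 3 ≤ A.card) :
    Representable G (1 + (A.card + 1) / 2) := by
  set LA := A.toList with hLA
  set P := chunk2 LA with hP
  set K : V → ℕ := fun z => (P.map (fun p => bpos G p z)).sum with hK
  set LB := B.toList.mergeSort (fun u v => decide (K u ≤ K v)) with hLBdef
  have hperm : LB ~ B.toList := List.mergeSort_perm _ _
  have hLBnd : LB.Nodup := hperm.nodup_iff.2 B.nodup_toList
  have hmemLB : ∀ z, z ∈ LB ↔ z ∈ B := fun z => by rw [hperm.mem_iff, Finset.mem_toList]
  have hsorted : List.Pairwise (fun u v => K u ≤ K v) LB := by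
    have h := List.pairwise_mergeSort (le := fun u v => decide (K u ≤ K v))
      (by intro a b c; simp only [decide_eq_true_eq]; omega)
      (by intro a b; simp only [Bool.or_eq_true, decide_eq_true_eq]; omega) B.toList
    exact h.imp (by intro a b h; simpa using h)
  have hlet : letters P = LA := chunk2_letters LA
  have hLAnd : LA.Nodup := A.nodup_toList
  have hndP : (letters P).Nodup := hlet ▸ hLAnd
  have hmemLA : ∀ z, z ∈ LA ↔ z ∈ A := fun z => Finset.mem_toList
  have hABd : ∀ z, z ∈ A → z ∉ B := fun z hz hz' => Finset.disjoint_left.1 hdisj hz hz'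
  have hmemlet : ∀ p ∈ P, ∀ z ∈ pl p, z ∈ A := by
    intro p hp z hz
    have : z ∈ letters P := List.mem_flatMap.2 ⟨p, hp, hz⟩
    exact (hmemLA z).1 (hlet ▸ this)
  have hplP : ∀ p ∈ P, ∀ z ∈ pl p, z ∉ LB := fun p hp z hz hzB =>
    hABd z (hmemlet p hp z hz) ((hmemLB z).1 hzB)
  have hPlen : P.length = (A.card + 1) / 2 := by
    rw [hP, chunk2_length, hLA, Finset.length_toList]
  have hPne : P ≠ [] := by
    intro h
    rw [h] at hPlen
    simp at hPlen
    omega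
  have hnotLB_of_A : ∀ z, z ∈ A → z ∉ LB := fun z hz hc => hABd z hz ((hmemLB z).1 hc)
  have hcnt : ∀ v : V, (LB.reverse ++ wa G LB P []).count v = 1 + (A.card + 1) / 2 := by
    intro v
    have hv : v ∈ A ∪ B := hAB ▸ Finset.mem_univ v
    rw [Finset.mem_union] at hv
    rcases hv with hv | hv
    · have hvLA : v ∈ letters P := hlet ▸ (hmemLA v).2 hv
      obtain ⟨P1, pa, P2, hsplit, hvpl, h1, h2⟩ := exists_split hndP hvLA
      have hnd2 : (pl pa).Nodup := by
        have h := hndP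
        rw [hsplit, letters_append, letters_cons] at h
        exact (h.of_append_right).of_append_left
      have hvLB : v ∉ LB := hnotLB_of_A v hv
      rw [List.count_append, List.count_reverse, List.count_eq_zero.2 hvLB, hsplit,
        wac_a1 (G := G) hvLB P1 pa P2 [] hvpl hnd2 h1 h2 (by simp)]
      have hl : P.length = P1.length + 1 + P2.length := by rw [hsplit, List.length_append, List.length_cons]; omega
      omega
    · have hvLB : v ∈ LB := (hmemLB v).2 hv
      rw [List.count_append, List.count_reverse, count_one_of_nodup hLBnd hvLB,
        wac_b (G := G) hLBnd hvLB P [] hplP (by simp)]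
      omega
  -- the case analyses for alternation
  have hBBalt : ∀ b c : V, b ∈ B → c ∈ B → b ≠ c →
      ¬ Alternate (LB.reverse ++ wa G LB P []) b c := by
    intro b c hb hc hne halt
    rw [alternate_iff] at halt
    have hbLB : b ∈ LB := (hmemLB b).2 hb
    have hcLB : c ∈ LB := (hmemLB c).2 hc
    rcases filter_prd_pair hLBnd hne hbLB hcLB with hfl | hfl
    · exact bb_case (G := G) hLBnd hsorted hne hbLB hcLB hfl hplP hPne halt
    · rw [prd_comm] at halt
      rw [prd_comm] at hfl
      exact bb_case (G := G) hLBnd hsorted hne.symm hcLB hbLB hfl hplP hPne halt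
  have hAAalt : ∀ a c : V, a ∈ A → c ∈ A → a ≠ c →
      ¬ Alternate (LB.reverse ++ wa G LB P []) a c := by
    intro a c ha hc hne halt
    rw [alternate_iff] at halt
    have haLA : a ∈ letters P := hlet ▸ (hmemLA a).2 ha
    obtain ⟨P1, pa, P2, hsplit, hapl, h1, h2⟩ := exists_split hndP haLA
    have hpaP : pa ∈ P := by rw [hsplit]; simp
    have hnd2 : (pl pa).Nodup := by
      have h := hndP
      rw [hsplit, letters_append, letters_cons] at h
      exact (h.of_append_right).of_append_left
    have haLB : a ∉ LB := hnotLB_of_A a ha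
    have hcLB : c ∉ LB := hnotLB_of_A c hc
    by_cases hcpl : c ∈ pl pa
    · -- same pair
      obtain ⟨x, _ | y⟩ := pa
      · simp only [pl, List.mem_singleton] at hapl hcpl
        exact hne (hapl.trans hcpl.symm)
      · have hxpl : x ∈ pl (x, some y) := by simp [pl]
        have hypl : y ∈ pl (x, some y) := by simp [pl]
        have hxy : x ≠ y := fun h => by simp [pl, h] at hnd2
        have hxLB : x ∉ LB := hnotLB_of_A x (hmemlet _ hpaP x hxpl)
        have hyLB : y ∉ LB := hnotLB_of_A y (hmemlet _ hpaP y hypl)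
        have hxs := split_not_mem (hsplit ▸ hndP) hxpl
        have hys := split_not_mem (hsplit ▸ hndP) hypl
        have hkey : ¬ ((LB.reverse ++ wa G LB P []).filter (prd x y)).Chain' (· ≠ ·) := by
          have hcorepa : (core G LB (x, some y)).filter (prd x y) = [x, y, x, y] :=
            core_filter_pair hxy hxLB hyLB
          rcases P2 with _ | ⟨q, P2'⟩
          · rcases List.eq_nil_or_concat P1 with rfl | ⟨Q, q, rfl⟩
            · rw [hsplit] at hPlen
              simp at hPlen
              omega
            · have hqP1 : q ∈ Q.concat q := by simp
              have hxq : x ∉ pl q := fun h =>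
                hxs.1 (List.mem_flatMap.2 ⟨q, hqP1, h⟩)
              have hyq : y ∉ pl q := fun h =>
                hys.1 (List.mem_flatMap.2 ⟨q, hqP1, h⟩)
              have hxQ : x ∉ letters Q := fun h =>
                hxs.1 (by rw [List.concat_eq_append, letters_append]; simp [h])
              have hyQ : y ∉ letters Q := fun h =>
                hys.1 (by rw [List.concat_eq_append, letters_append]; simp [h])
              have hsplit' : P = Q ++ q :: [(x, some y)] := by
                rw [hsplit, List.concat_eq_append]
                simp
              obtain ⟨W1, hW1⟩ := wa_split G LB Q q [(x, some y)] []
              have hfpa : (flatR [(x, some y)]).filter (prd x y) = [y, x] := by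
                have : flatR [(x, some y)] = rp (x, some y) := by simp [flatR]
                rw [this, rp_filter_pair hxy]
              have hcoreq : (core G LB q).filter (prd x y) = [] :=
                core_filter_nil hxLB hyLB hxq hyq
              have hfQ : (flatR Q).filter (prd x y) = [] := flatR_filter_nil hxQ hyQ
              have hrpq : (rp q).filter (prd x y) = [] :=
                filter_prd_nil (fun h => hxq ((rp_perm_pl q).mem_iff.1 h))
                  (fun h => hyq ((rp_perm_pl q).mem_iff.1 h))
              have hwa1 : ∀ post : List V, wa G LB [(x, some y)] post =
                  core G LB (x, some y) ++ post := by
                intro post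
                simp [wa, flatR]
              intro hch
              refine no_chain_of_dup (a := x)
                (LB.reverse.filter (prd x y) ++ W1.filter (prd x y) ++ [y]) [y, x, y] ?_ hch
              rw [List.filter_append, hsplit', hW1, hwa1]
              simp only [List.filter_append, hfpa, hcoreq, hfQ, hrpq, hcorepa,
                List.filter_nil, List.nil_append, List.append_nil]
              simp
          · have hqP2 : q ∈ q :: P2' := List.mem_cons_self
            have hxq : x ∉ pl q := fun h =>
              hxs.2 (List.mem_flatMap.2 ⟨q, hqP2, h⟩)
            have hyq : y ∉ pl q := fun h =>
              hys.2 (List.mem_flatMap.2 ⟨q, hqP2, h⟩)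
            have hxP2' : x ∉ letters P2' := fun h =>
              hxs.2 (by rw [letters_cons]; simp [h])
            have hyP2' : y ∉ letters P2' := fun h =>
              hys.2 (by rw [letters_cons]; simp [h])
            have hxP2 : x ∉ letters (q :: P2') := hxs.2
            have hyP2 : y ∉ letters (q :: P2') := hys.2
            obtain ⟨W1, hW1⟩ := wa_split G LB P1 (x, some y) (q :: P2') []
            have hfP2 : (flatR (q :: P2')).filter (prd x y) = [] :=
              flatR_filter_nil hxP2 hyP2
            have hfP2' : (flatR P2').filter (prd x y) = [] :=
              flatR_filter_nil hxP2' hyP2'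
            have hcoreq : (core G LB q).filter (prd x y) = [] :=
              core_filter_nil hxLB hyLB hxq hyq
            have hfP1 : (flatR P1).filter (prd x y) = [] :=
              flatR_filter_nil hxs.1 hys.1
            have hrppa : (rp (x, some y)).filter (prd x y) = [y, x] := rp_filter_pair hxy
            have hrpq : (rp q).filter (prd x y) = [] :=
              filter_prd_nil (fun h => hxq ((rp_perm_pl q).mem_iff.1 h))
                (fun h => hyq ((rp_perm_pl q).mem_iff.1 h))
            intro hch
            refine no_chain_of_dup (a := y)
              (LB.reverse.filter (prd x y) ++ W1.filter (prd x y) ++ [x, y, x])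
              (x :: (wa G LB P2' ((([] ++ flatR P1) ++ rp (x, some y) ++ rp q))).filter
                (prd x y)) ?_ hch
            rw [List.filter_append, hsplit, hW1]
            rw [show wa G LB (q :: P2') (([] ++ flatR P1) ++ rp (x, some y)) =
              (flatR P2' ++ core G LB q ++ (([] ++ flatR P1) ++ rp (x, some y)))
                ++ wa G LB P2' ((([] ++ flatR P1) ++ rp (x, some y)) ++ rp q) from by
                simp [wa]]
            simp only [List.filter_append, hfP2, hfP2', hcoreq, hfP1, hrppa, hrpq, hcorepa,
              List.filter_nil, List.nil_append, List.append_nil]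
            simp
        have hax : a = x ∨ a = y := by simpa [pl] using hapl
        have hcx : c = x ∨ c = y := by simpa [pl] using hcpl
        rcases hax with rfl | rfl <;> rcases hcx with rfl | rfl
        · exact hne rfl
        · exact hkey halt
        · rw [prd_comm] at halt
          exact hkey halt
        · exact hne rfl
    · -- different pairs: a is doubled in its own core, c is elsewhere
      obtain ⟨W1, hW1⟩ := wa_split G LB P1 pa P2 []
      obtain ⟨u, v, huv⟩ := core_filter_dup_other (G := G) (p := pa) hapl hcpl haLB hcLB hnd2
      refine no_chain_of_dup (a := a)
        (LB.reverse.filter (prd a c) ++ W1.filter (prd a c)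
          ++ (flatR P2).filter (prd a c) ++ u)
        (v ++ (([] ++ flatR P1).filter (prd a c)
          ++ (wa G LB P2 (([] ++ flatR P1) ++ rp pa)).filter (prd a c))) ?_ halt
      rw [List.filter_append, hsplit, hW1]
      simp only [List.filter_append, huv]
      simp
  have hABedge : ∀ a b : V, a ∈ A → b ∈ B → G.Adj a b →
      Alternate (LB.reverse ++ wa G LB P []) a b := by
    intro a b ha hb hadj
    rw [alternate_iff]
    have haLB : a ∉ LB := hnotLB_of_A a ha
    have hbLB : b ∈ LB := (hmemLB b).2 hb
    have haLA : a ∈ letters P := hlet ▸ (hmemLA a).2 ha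
    obtain ⟨P1, pa, P2, hsplit, hapl, h1, h2⟩ := exists_split hndP haLA
    have hrevF : LB.reverse.filter (prd a b) = [b] := by
      rw [List.filter_reverse, prd_comm, filter_prd_single hLBnd hbLB haLB]
      rfl
    have hplP' : ∀ p ∈ P1 ++ pa :: P2, ∀ z ∈ pl p, z ∉ LB := hsplit ▸ hplP
    have hndP' : (letters (P1 ++ pa :: P2)).Nodup := hsplit ▸ hndP
    rw [List.filter_append, hrevF, hsplit,
      waf_edge (G := G) hLBnd hbLB haLB hadj P1 pa P2 [] hplP' hndP' hapl h1 h2 (by simp)]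
    have hba : b ≠ a := (G.ne_of_adj hadj).symm
    have h := chain'_alt (a := a) (b := b) hba (P1.length + P2.length + 2)
    rw [← edge_pattern] at h
    simpa [List.append_assoc] using h
  have hABnon : ∀ a b : V, a ∈ A → b ∈ B → ¬ G.Adj a b →
      ¬ Alternate (LB.reverse ++ wa G LB P []) a b := by
    intro a b ha hb hnadj halt
    rw [alternate_iff] at halt
    have haLB : a ∉ LB := hnotLB_of_A a ha
    have hbLB : b ∈ LB := (hmemLB b).2 hb
    have haLA : a ∈ letters P := hlet ▸ (hmemLA a).2 ha
    obtain ⟨P1, pa, P2, hsplit, hapl, h1, h2⟩ := exists_split hndP haLA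
    have hpaP : pa ∈ P := by rw [hsplit]; simp
    have hnd2 : (pl pa).Nodup := by
      have h := hndP
      rw [hsplit, letters_append, letters_cons] at h
      exact (h.of_append_right).of_append_left
    have hbpl : b ∉ pl pa := fun h => hABd b (hmemlet _ hpaP b h) hb
    obtain ⟨W1, hW1⟩ := wa_split G LB P1 pa P2 []
    obtain ⟨u, v, huv⟩ := core_filter_nonedge (G := G) hLBnd hbLB haLB hapl hbpl hnd2 hnadj
    refine no_chain_of_dup (a := a)
      (LB.reverse.filter (prd a b) ++ W1.filter (prd a b)
        ++ (flatR P2).filter (prd a b) ++ u)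
      (v ++ (([] ++ flatR P1).filter (prd a b)
        ++ (wa G LB P2 (([] ++ flatR P1) ++ rp pa)).filter (prd a b))) ?_ halt
    rw [List.filter_append, hsplit, hW1]
    simp only [List.filter_append, huv]
    simp
  -- assemble
  refine ⟨LB.reverse ++ wa G LB P [],
    ⟨fun v => List.count_pos_iff.1 (by rw [hcnt v]; omega), ?_⟩, hcnt⟩
  intro s t hst
  have hs : s ∈ A ∪ B := hAB ▸ Finset.mem_univ s
  have ht : t ∈ A ∪ B := hAB ▸ Finset.mem_univ t
  rw [Finset.mem_union] at hs ht
  rcases hs with hs | hs <;> rcases ht with ht | ht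
  · exact iff_of_false (fun hadj => by
        rcases hcross s t hadj with ⟨_, h⟩ | ⟨h, _⟩
        · exact hABd t ht h
        · exact hABd s hs h)
      (hAAalt s t hs ht hst)
  · by_cases hadj : G.Adj s t
    · exact iff_of_true hadj (hABedge s t hs ht hadj)
    · exact iff_of_false hadj (hABnon s t hs ht hadj)
  · rw [G.adj_comm, alternate_comm]
    by_cases hadj : G.Adj t s
    · exact iff_of_true hadj (hABedge t s ht hs hadj)
    · exact iff_of_false hadj (hABnon t s ht hs hadj)
  · exact iff_of_false (fun hadj => by
        rcases hcross s t hadj with ⟨h, _⟩ | ⟨_, h⟩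
        · exact hABd s h hs
        · exact hABd t h ht)
      (hBBalt s t hs ht hst)
/-! ### m = 1 -/

lemma main1 {V : Type*} [Fintype V] [DecidableEq V] (G : SimpleGraph V)
    (A B : Finset V) (hAB : A ∪ B = Finset.univ) (hdisj : Disjoint A B)
    (hcross : ∀ a b : V, G.Adj a b → (a ∈ A ∧ b ∈ B) ∨ (a ∈ B ∧ b ∈ A))
    (hconn : G.Connected) (hred : Reduced G) (hA1 : A.card = 1) (hBne : B.Nonempty) :
    Representable G 2 := by
  obtain ⟨a, rfl⟩ := Finset.card_eq_one.1 hA1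
  obtain ⟨b, hb⟩ := hBne
  have hain : a ∉ B := fun h => Finset.disjoint_left.1 hdisj (Finset.mem_singleton_self a) h
  have hadjB : ∀ b' ∈ B, G.Adj a b' := by
    intro b' hb'
    have hba : b' ≠ a := fun h => hain (h ▸ hb')
    obtain ⟨w⟩ := hconn b' a
    cases w with
    | nil => exact absurd rfl hba
    | cons h p =>
      rcases hcross _ _ h with ⟨h1, _⟩ | ⟨_, h2⟩
      · exact absurd (Finset.mem_singleton.1 h1) hba
      · have h3 := Finset.mem_singleton.1 h2
        subst h3
        exact h.symm
  have key : ∀ d ∈ B, G.neighborSet d = {a} := by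
    intro d hd
    ext z
    simp only [SimpleGraph.mem_neighborSet, Set.mem_singleton_iff]
    constructor
    · intro hz
      rcases hcross _ _ hz with ⟨h1, _⟩ | ⟨_, h2⟩
      · exact absurd (Finset.mem_singleton.1 h1 ▸ hd) hain
      · exact Finset.mem_singleton.1 h2
    · rintro rfl
      exact (hadjB d hd).symm
  have hBsing : ∀ b' ∈ B, b' = b := fun b' hb' =>
    hred b' b ((key b' hb').trans (key b hb).symm)
  have huniv : ∀ v : V, v = a ∨ v = b := by
    intro v
    have hv : v ∈ {a} ∪ B := hAB ▸ Finset.mem_univ v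
    rw [Finset.mem_union, Finset.mem_singleton] at hv
    rcases hv with h | h
    · exact Or.inl h
    · exact Or.inr (hBsing v h)
  have hadj : G.Adj a b := hadjB b hb
  have hne : a ≠ b := G.ne_of_adj hadj
  refine ⟨[a, b, a, b], ⟨?_, ?_⟩, ?_⟩
  · intro v
    rcases huniv v with rfl | rfl <;> simp
  · intro s t hst
    have hfl : [a, b, a, b].filter (prd a b) = [a, b, a, b] := by
      simp [List.filter_cons, prd_left, prd_right]
    have hAlt : Alternate [a, b, a, b] a b := by
      rw [alternate_iff, hfl]
      simp [List.Chain', List.isChain_cons_cons, hne, Ne.symm hne]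
    have hAlt' : Alternate [a, b, a, b] b a := (alternate_comm _).1 hAlt
    rcases huniv s with rfl | rfl <;> rcases huniv t with rfl | rfl
    · exact absurd rfl hst
    · exact iff_of_true hadj hAlt
    · exact iff_of_true hadj.symm hAlt'
    · exact absurd rfl hst
  · intro v
    rcases huniv v with rfl | rfl <;>
      simp [List.count_cons, hne, Ne.symm hne]

/-! ### m = 2 -/

lemma main2 {V : Type*} [Fintype V] [DecidableEq V] (G : SimpleGraph V) [DecidableRel G.Adj]
    (A B : Finset V) (hAB : A ∪ B = Finset.univ) (hdisj : Disjoint A B)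
    (hcross : ∀ a b : V, G.Adj a b → (a ∈ A ∧ b ∈ B) ∨ (a ∈ B ∧ b ∈ A))
    (hred : Reduced G) (hA2 : A.card = 2) : Representable G 2 := by
  obtain ⟨x, y, hxy, rfl⟩ := Finset.card_eq_two.1 hA2
  set LB := B.toList with hLBdef
  have hLBnd : LB.Nodup := B.nodup_toList
  have hmemLB : ∀ z, z ∈ LB ↔ z ∈ B := fun z => Finset.mem_toList
  set p0 : V × Option V := (x, some y) with hp0
  set L1 := cf G LB p0 0 ++ [x] ++ cf G LB p0 1 ++ [y] ++ cf G LB p0 2 ++ cf G LB p0 3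
    with hL1
  set L2 := [y] ++ cf G LB p0 3 ++ [x] ++ cf G LB p0 2 ++ cf G LB p0 1 ++ cf G LB p0 0
    with hL2
  have hxA : x ∈ ({x, y} : Finset V) := by simp
  have hyA : y ∈ ({x, y} : Finset V) := by simp
  have hxB : x ∉ LB := fun h => Finset.disjoint_left.1 hdisj hxA ((hmemLB x).1 h)
  have hyB : y ∉ LB := fun h => Finset.disjoint_left.1 hdisj hyA ((hmemLB y).1 h)
  have hadjx : ∀ b : V, G.Adj x b ↔ (bpos G p0 b = 1 ∨ bpos G p0 b = 2) := by
    intro b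
    by_cases h1 : G.Adj x b <;> by_cases h2 : G.Adj y b <;> simp [hp0, bpos, h1, h2]
  have hadjy : ∀ b : V, G.Adj y b ↔ (bpos G p0 b = 2 ∨ bpos G p0 b = 3) := by
    intro b
    by_cases h1 : G.Adj x b <;> by_cases h2 : G.Adj y b <;> simp [hp0, bpos, h1, h2]
  have hBA : ∀ b : V, b ∈ B → b ∉ ({x, y} : Finset V) := fun b hb hc =>
    Finset.disjoint_left.1 hdisj hc hb
  have hsame : ∀ b ∈ B, ∀ b' ∈ B, bpos G p0 b = bpos G p0 b' → b = b' := by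
    intro b hb b' hb' hbp
    apply hred
    ext z
    simp only [SimpleGraph.mem_neighborSet]
    by_cases hzx : z = x
    · rw [hzx, G.adj_comm b x, G.adj_comm b' x, hadjx b, hadjx b', hbp]
    · by_cases hzy : z = y
      · rw [hzy, G.adj_comm b y, G.adj_comm b' y, hadjy b, hadjy b', hbp]
      · constructor <;> intro hz
        · rcases hcross _ _ hz with ⟨h1, _⟩ | ⟨_, h2⟩
          · exact absurd h1 (hBA b hb)
          · rcases Finset.mem_insert.1 h2 with h | h
            · exact absurd h hzx
            · exact absurd (Finset.mem_singleton.1 h) hzy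
        · rcases hcross _ _ hz with ⟨h1, _⟩ | ⟨_, h2⟩
          · exact absurd h1 (hBA b' hb')
          · rcases Finset.mem_insert.1 h2 with h | h
            · exact absurd h hzx
            · exact absurd (Finset.mem_singleton.1 h) hzy
  have hnadjAA : ∀ s t : V, s ∈ ({x, y} : Finset V) → t ∈ ({x, y} : Finset V) →
      ¬ G.Adj s t := by
    intro s t hs ht hadj
    rcases hcross _ _ hadj with ⟨_, h2⟩ | ⟨h1, _⟩
    · exact Finset.disjoint_left.1 hdisj ht h2
    · exact Finset.disjoint_left.1 hdisj hs h1
  -- counts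
  have hcnt : ∀ v : V, (L1 ++ L2).count v = 2 := by
    intro v
    have hv : v ∈ {x, y} ∪ B := hAB ▸ Finset.mem_univ v
    rw [Finset.mem_union] at hv
    rcases hv with hv | hv
    · have hvB : v ∉ LB := fun h => Finset.disjoint_left.1 hdisj hv ((hmemLB v).1 h)
      rcases Finset.mem_insert.1 hv with rfl | hv'
      · simp [hL1, hL2, List.count_append, count_cf_zero (G := G) hvB, List.count_cons, hxy,
          Ne.symm hxy]
      · have : v = y := Finset.mem_singleton.1 hv'
        subst this
        simp [hL1, hL2, List.count_append, count_cf_zero (G := G) hvB, List.count_cons, hxy,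
          Ne.symm hxy]
    · have hvLB : v ∈ LB := (hmemLB v).2 hv
      have hvx : v ≠ x := fun h => hxB (h ▸ hvLB)
      have hvy : v ≠ y := fun h => hyB (h ▸ hvLB)
      have h4 := bpos_lt G p0 v
      have hi : bpos G p0 v = 0 ∨ bpos G p0 v = 1 ∨ bpos G p0 v = 2 ∨ bpos G p0 v = 3 := by
        omega
      rcases hi with h | h | h | h <;>
        simp [hL1, hL2, List.count_append, count_cf (G := G) hLBnd hvLB, h, List.count_cons,
          hvx, hvy, Ne.symm hvx, Ne.symm hvy]
  -- alternation helpers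
  have hAAalt : ¬ Alternate (L1 ++ L2) x y := by
    have hcfnil : ∀ i : ℕ, (cf G LB p0 i).filter (prd x y) = [] := fun i =>
      filter_prd_nil (fun h => hxB (List.mem_of_mem_filter h))
        (fun h => hyB (List.mem_of_mem_filter h))
    rw [alternate_iff, List.filter_append]
    have e1 : L1.filter (prd x y) = [x, y] := by
      simp [hL1, List.filter_append, hcfnil, List.filter_cons, prd_left, prd_right]
    have e2 : L2.filter (prd x y) = [y, x] := by
      simp [hL2, List.filter_append, hcfnil, List.filter_cons, prd_left, prd_right]
    rw [e1, e2]
    simp [List.Chain', List.isChain_cons_cons]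
  have hxbAlt : ∀ b ∈ B, (G.Adj x b ↔ Alternate (L1 ++ L2) x b) := by
    intro b hb
    have hbLB : b ∈ LB := (hmemLB b).2 hb
    have hbx : b ≠ x := fun h => hxB (h ▸ hbLB)
    have hby : b ≠ y := fun h => hyB (h ▸ hbLB)
    have hyp : prd x b y = false := prd_other (Ne.symm hxy) (Ne.symm hby)
    have h4 := bpos_lt G p0 b
    have hi : bpos G p0 b = 0 ∨ bpos G p0 b = 1 ∨ bpos G p0 b = 2 ∨ bpos G p0 b = 3 := by
      omega
    rw [alternate_iff, List.filter_append]
    rcases hi with h | h | h | h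
    · have e1 : L1.filter (prd x b) = [b, x] := by
        simp [hL1, List.filter_append, cf_filter_ab (G := G) hLBnd hbLB hxB, h,
          List.filter_cons, prd_left, hyp]
      have e2 : L2.filter (prd x b) = [x, b] := by
        simp [hL2, List.filter_append, cf_filter_ab (G := G) hLBnd hbLB hxB, h,
          List.filter_cons, prd_left, hyp]
      rw [e1, e2]
      refine iff_of_false (fun hadj => by rw [hadjx] at hadj; omega) ?_
      simp [List.Chain', List.isChain_cons_cons]
    · have e1 : L1.filter (prd x b) = [x, b] := by
        simp [hL1, List.filter_append, cf_filter_ab (G := G) hLBnd hbLB hxB, h,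
          List.filter_cons, prd_left, hyp]
      have e2 : L2.filter (prd x b) = [x, b] := by
        simp [hL2, List.filter_append, cf_filter_ab (G := G) hLBnd hbLB hxB, h,
          List.filter_cons, prd_left, hyp]
      rw [e1, e2]
      refine iff_of_true ((hadjx b).2 (Or.inl h)) ?_
      simp [List.Chain', List.isChain_cons_cons, hbx, Ne.symm hbx]
    · have e1 : L1.filter (prd x b) = [x, b] := by
        simp [hL1, List.filter_append, cf_filter_ab (G := G) hLBnd hbLB hxB, h,
          List.filter_cons, prd_left, hyp]
      have e2 : L2.filter (prd x b) = [x, b] := by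
        simp [hL2, List.filter_append, cf_filter_ab (G := G) hLBnd hbLB hxB, h,
          List.filter_cons, prd_left, hyp]
      rw [e1, e2]
      refine iff_of_true ((hadjx b).2 (Or.inr h)) ?_
      simp [List.Chain', List.isChain_cons_cons, hbx, Ne.symm hbx]
    · have e1 : L1.filter (prd x b) = [x, b] := by
        simp [hL1, List.filter_append, cf_filter_ab (G := G) hLBnd hbLB hxB, h,
          List.filter_cons, prd_left, hyp]
      have e2 : L2.filter (prd x b) = [b, x] := by
        simp [hL2, List.filter_append, cf_filter_ab (G := G) hLBnd hbLB hxB, h,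
          List.filter_cons, prd_left, hyp]
      rw [e1, e2]
      refine iff_of_false (fun hadj => by rw [hadjx] at hadj; omega) ?_
      simp [List.Chain', List.isChain_cons_cons]
  have hybAlt : ∀ b ∈ B, (G.Adj y b ↔ Alternate (L1 ++ L2) y b) := by
    intro b hb
    have hbLB : b ∈ LB := (hmemLB b).2 hb
    have hbx : b ≠ x := fun h => hxB (h ▸ hbLB)
    have hby : b ≠ y := fun h => hyB (h ▸ hbLB)
    have hxp : prd y b x = false := prd_other hxy (Ne.symm hbx)
    have h4 := bpos_lt G p0 b
    have hi : bpos G p0 b = 0 ∨ bpos G p0 b = 1 ∨ bpos G p0 b = 2 ∨ bpos G p0 b = 3 := by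
      omega
    rw [alternate_iff, List.filter_append]
    rcases hi with h | h | h | h
    · have e1 : L1.filter (prd y b) = [b, y] := by
        simp [hL1, List.filter_append, cf_filter_ab (G := G) hLBnd hbLB hyB, h,
          List.filter_cons, prd_left, hxp]
      have e2 : L2.filter (prd y b) = [y, b] := by
        simp [hL2, List.filter_append, cf_filter_ab (G := G) hLBnd hbLB hyB, h,
          List.filter_cons, prd_left, hxp]
      rw [e1, e2]
      refine iff_of_false (fun hadj => by rw [hadjy] at hadj; omega) ?_
      simp [List.Chain', List.isChain_cons_cons]
    · have e1 : L1.filter (prd y b) = [b, y] := by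
        simp [hL1, List.filter_append, cf_filter_ab (G := G) hLBnd hbLB hyB, h,
          List.filter_cons, prd_left, hxp]
      have e2 : L2.filter (prd y b) = [y, b] := by
        simp [hL2, List.filter_append, cf_filter_ab (G := G) hLBnd hbLB hyB, h,
          List.filter_cons, prd_left, hxp]
      rw [e1, e2]
      refine iff_of_false (fun hadj => by rw [hadjy] at hadj; omega) ?_
      simp [List.Chain', List.isChain_cons_cons]
    · have e1 : L1.filter (prd y b) = [y, b] := by
        simp [hL1, List.filter_append, cf_filter_ab (G := G) hLBnd hbLB hyB, h,
          List.filter_cons, prd_left, hxp]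
      have e2 : L2.filter (prd y b) = [y, b] := by
        simp [hL2, List.filter_append, cf_filter_ab (G := G) hLBnd hbLB hyB, h,
          List.filter_cons, prd_left, hxp]
      rw [e1, e2]
      refine iff_of_true ((hadjy b).2 (Or.inl h)) ?_
      simp [List.Chain', List.isChain_cons_cons, hby, Ne.symm hby]
    · have e1 : L1.filter (prd y b) = [y, b] := by
        simp [hL1, List.filter_append, cf_filter_ab (G := G) hLBnd hbLB hyB, h,
          List.filter_cons, prd_left, hxp]
      have e2 : L2.filter (prd y b) = [y, b] := by
        simp [hL2, List.filter_append, cf_filter_ab (G := G) hLBnd hbLB hyB, h,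
          List.filter_cons, prd_left, hxp]
      rw [e1, e2]
      refine iff_of_true ((hadjy b).2 (Or.inr h)) ?_
      simp [List.Chain', List.isChain_cons_cons, hby, Ne.symm hby]
  have hbbAlt : ∀ b ∈ B, ∀ b' ∈ B, b ≠ b' → ¬ Alternate (L1 ++ L2) b b' := by
    intro b hb b' hb' hne halt
    have hbLB : b ∈ LB := (hmemLB b).2 hb
    have hb'LB : b' ∈ LB := (hmemLB b').2 hb'
    have hip : bpos G p0 b ≠ bpos G p0 b' := fun h => hne (hsame b hb b' hb' h)
    have hxp : prd b b' x = false :=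
      prd_other (fun h => hxB (h ▸ hbLB)) (fun h => hxB (h ▸ hb'LB))
    have hyp : prd b b' y = false :=
      prd_other (fun h => hyB (h ▸ hbLB)) (fun h => hyB (h ▸ hb'LB))
    rw [alternate_iff, List.filter_append] at halt
    have h4 := bpos_lt G p0 b
    have h4' := bpos_lt G p0 b'
    have hi : bpos G p0 b = 0 ∨ bpos G p0 b = 1 ∨ bpos G p0 b = 2 ∨ bpos G p0 b = 3 := by
      omega
    have hj : bpos G p0 b' = 0 ∨ bpos G p0 b' = 1 ∨ bpos G p0 b' = 2 ∨
        bpos G p0 b' = 3 := by omega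
    rcases hi with h | h | h | h <;> rcases hj with h' | h' | h' | h' <;>
      first
        | exact hip (h.trans h'.symm)
        | (simp only [hL1, hL2, List.filter_append,
            cf_filter_bb (G := G) hLBnd hbLB hb'LB hne, h, h', List.filter_cons, hxp, hyp,
            cond_false, List.filter_nil] at halt
           simp [List.Chain', List.isChain_cons_cons, hne, Ne.symm hne] at halt)
  -- assemble
  refine ⟨L1 ++ L2, ⟨fun v => List.count_pos_iff.1 (by rw [hcnt v]; omega), ?_⟩, hcnt⟩
  intro s t hst
  have hs : s ∈ {x, y} ∪ B := hAB ▸ Finset.mem_univ s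
  have ht : t ∈ {x, y} ∪ B := hAB ▸ Finset.mem_univ t
  rw [Finset.mem_union] at hs ht
  rcases hs with hs | hs <;> rcases ht with ht | ht
  · refine iff_of_false (hnadjAA s t hs ht) ?_
    rcases Finset.mem_insert.1 hs with rfl | hs' <;> rcases Finset.mem_insert.1 ht with rfl | ht'
    · exact absurd rfl hst
    · have : t = y := Finset.mem_singleton.1 ht'
      subst this
      exact hAAalt
    · have : s = y := Finset.mem_singleton.1 hs'
      subst this
      intro halt
      rw [alternate_comm] at halt
      exact hAAalt halt
    · have h1 : s = y := Finset.mem_singleton.1 hs'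
      have h2 : t = y := Finset.mem_singleton.1 ht'
      exact absurd (h1.trans h2.symm) hst
  · rcases Finset.mem_insert.1 hs with rfl | hs'
    · exact hxbAlt t ht
    · have : s = y := Finset.mem_singleton.1 hs'
      subst this
      exact hybAlt t ht
  · rw [G.adj_comm, alternate_comm]
    rcases Finset.mem_insert.1 ht with rfl | ht'
    · exact hxbAlt s hs
    · have : t = y := Finset.mem_singleton.1 ht'
      subst this
      exact hybAlt s hs
  · exact iff_of_false (fun hadj => by
        rcases hcross _ _ hadj with ⟨h1, _⟩ | ⟨_, h2⟩
        · exact Finset.disjoint_left.1 hdisj h1 hs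
        · exact Finset.disjoint_left.1 hdisj h2 ht)
      (hbbAlt s hs t ht hst)

end BipRep

theorem bipartite_representable_one_add_ceil_half
    {V : Type*} [Fintype V] [DecidableEq V] (G : SimpleGraph V)
    (A B : Finset V) (m n : ℕ)
    (hbip : IsBipartition G A B) (hconn : G.Connected) (hred : Reduced G)
    (hA : A.card = m) (hB : B.card = n)
    (hm : 1 ≤ m) (hmn : m ≤ n) :
    Representable G (1 + (m + 1) / 2) ∧ repNumber G ≤ 1 + (m + 1) / 2 := by
  classical
  obtain ⟨hAB, hdisj, hcross⟩ := hbip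
  subst hA
  subst hB
  letI : DecidableRel G.Adj := Classical.decRel _
  have hBne : B.Nonempty := Finset.card_pos.1 (by omega)
  have hrep : Representable G (1 + (A.card + 1) / 2) := by
    by_cases h1 : A.card = 1
    · have h := BipRep.main1 G A B hAB hdisj hcross hconn hred h1 hBne
      rwa [show 1 + (A.card + 1) / 2 = 2 by rw [h1]]
    · by_cases h2 : A.card = 2
      · have h := BipRep.main2 G A B hAB hdisj hcross hred h2
        rwa [show 1 + (A.card + 1) / 2 = 2 by rw [h2]]
      · exact BipRep.main3 G A B hAB hdisj hcross (by omega)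
  exact ⟨hrep, by rw [repNumber]; exact Nat.sInf_le hrep⟩
end

section
/- Let G be a finite connected reduced bipartite graph with partite sets A and B of sizes m and n respectively, where 1 ≤ m ≤ n. If m is even and n = m + 1 or n = m + 2, then the representation number of G satisfies R(G) ≤ ⌈(m+n)/4⌉. -/
set_option linter.unusedSectionVars false
set_option linter.unusedVariables false

namespace WordRepAux
set_option linter.unusedSectionVars false
set_option linter.unusedVariables false


variable {α : Type*}

/-- The alternating list `a b a b ...` of length `n`. -/
def alt (a b : α) : ℕ → List α
  | 0 => []
  | n+1 => a :: alt b a n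

@[simp] lemma alt_zero (a b : α) : alt a b 0 = [] := rfl
lemma alt_succ (a b : α) (n : ℕ) : alt a b (n+1) = a :: alt b a n := rfl

lemma alt_two (a b : α) (n : ℕ) : alt a b (n+2) = a :: b :: alt a b n := rfl

lemma alt_head (a b : α) (n : ℕ) : (alt a b (n+1)).head? = some a := rfl

lemma chain'_alt {a b : α} (h : a ≠ b) : ∀ n, (alt a b n).Chain' (· ≠ ·) := by
  intro n
  induction n using Nat.strong_induction_on generalizing a b with
  | _ n ih =>
    match n with
    | 0 => simp [List.Chain']
    | 1 => simp [alt, List.Chain']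
    | (m+2) =>
      rw [alt_two]
      refine List.isChain_cons_cons.mpr ?_
      constructor
      · exact h
      · rw [← alt_succ]
        exact ih (m+1) (by omega) h.symm

lemma alt_add (a b : α) (n m : ℕ) :
    alt a b (n + m) = alt a b n ++ (if n % 2 = 0 then alt a b m else alt b a m) := by
  induction n generalizing a b with
  | zero => simp
  | succ k ih =>
    have : k + 1 + m = (k + m) + 1 := by omega
    rw [this, alt_succ, alt_succ, ih b a]
    rcases Nat.even_or_odd k with hk | hk
    · have h1 : k % 2 = 0 := Nat.even_iff.mp hk
      have h2 : (k+1) % 2 ≠ 0 := by omega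
      simp [h1, h2]
    · have h1 : k % 2 ≠ 0 := by have := Nat.odd_iff.mp hk; omega
      have h2 : (k+1) % 2 = 0 := by have := Nat.odd_iff.mp hk; omega
      simp [h1, h2]

lemma not_chain'_of_infix_pair {x : α} {l : List α} (h : [x, x] <:+: l) :
    ¬ l.Chain' (· ≠ ·) := by
  intro hc
  have := hc.infix h
  simp [List.Chain', List.isChain_cons_cons] at this


variable {α : Type*}

section DecEq
variable [DecidableEq α]

lemma alternate_comm (w : List α) (u v : α) : Alternate w u v ↔ Alternate w v u := by
  unfold Alternate
  rw [List.filter_congr (fun x _ => ?_)]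
  exact decide_eq_decide.mpr or_comm

lemma filter_eq_single {l : List α} {q : α → Bool} {v : α}
    (h1 : ∀ x ∈ l, q x = true → x = v) (h2 : l.count v = 1) (h3 : q v = true) :
    l.filter q = [v] := by
  induction l with
  | nil => simp at h2
  | cons x xs ih =>
    by_cases hx : x = v
    · subst hx
      have hxs : xs.count x = 0 := by
        have := List.count_cons_self (a := x) (l := xs); omega
      have hnil : xs.filter q = [] := by
        rw [List.filter_eq_nil_iff]
        intro a ha hqa
        have : a = x := h1 a (List.mem_cons_of_mem _ ha) hqa
        subst this
        have := List.count_pos_iff.mpr ha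
        omega
      rw [List.filter_cons_of_pos h3, hnil]
    · have hq : q x = false := by
        rcases Bool.eq_false_or_eq_true (q x) with h | h
        · exact absurd (h1 x (List.mem_cons_self (a := x) (l := xs)) h) hx
        · exact h
      have hcnt : xs.count v = 1 := by
        rw [List.count_cons_of_ne hx] at h2
        exact h2
      rw [List.filter_cons_of_neg (by simp [hq])]
      exact ih (fun a ha => h1 a (List.mem_cons_of_mem _ ha)) hcnt

lemma not_alternate_of_double {w : List α} {u v x : α} (hx : x = u ∨ x = v)
    (p mid q : List α) (hw : w = p ++ [x] ++ mid ++ [x] ++ q)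
    (hmid : ∀ y ∈ mid, y ≠ u ∧ y ≠ v) : ¬ Alternate w u v := by
  unfold Alternate
  subst hw
  set q' : α → Bool := fun y => decide (y = u ∨ y = v) with hq'
  have hmid' : mid.filter q' = [] := by
    rw [List.filter_eq_nil_iff]
    intro a ha
    simp only [hq', decide_eq_true_eq]
    rcases hmid a ha with ⟨h1, h2⟩
    tauto
  have hxq : q' x = true := by simp only [hq', decide_eq_true_eq]; tauto
  have hsing : [x].filter q' = [x] := by simp [List.filter_singleton, hxq]
  have : (p ++ [x] ++ mid ++ [x] ++ q).filter q' =
      p.filter q' ++ ([x] ++ ([] ++ ([x] ++ q.filter q'))) := by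
    simp only [List.filter_append, hmid', hsing]
    simp [List.append_assoc]
  rw [this]
  apply not_chain'_of_infix_pair (x := x)
  exact ⟨p.filter q', q.filter q', by simp⟩

lemma length_eq_counts {l : List α} {b b' : α} (h : ∀ x ∈ l, x = b ∨ x = b') (hne : b ≠ b') :
    l.length = l.count b + l.count b' := by
  induction l with
  | nil => simp
  | cons x xs ih =>
    have hx := h x (List.mem_cons_self (a := x) (l := xs))
    have hxs := ih (fun a ha => h a (List.mem_cons_of_mem _ ha))
    rcases hx with hx | hx <;> subst hx <;>
      simp [List.count_cons, hne, hne.symm, hxs] <;> omega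

lemma filter_pair {l : List α} {b b' : α} (hne : b ≠ b')
    (h : ∀ x ∈ l.filter (fun x => x = b ∨ x = b'), x = b ∨ x = b')
    (hb : l.count b = 1) (hb' : l.count b' = 1) :
    l.filter (fun x => x = b ∨ x = b') = [b, b'] ∨
    l.filter (fun x => x = b ∨ x = b') = [b', b] := by
  set f := l.filter (fun x => x = b ∨ x = b') with hf
  have hcb : f.count b = 1 := by
    rw [hf, List.count_filter (by simp)]; exact hb
  have hcb' : f.count b' = 1 := by
    rw [hf, List.count_filter (by simp)]; exact hb'
  have hlen : f.length = 2 := by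
    rw [length_eq_counts h hne, hcb, hcb']
  rcases List.length_eq_two.mp hlen with ⟨x, y, hxy⟩
  rw [hxy] at hcb hcb' h ⊢
  have hx := h x (by simp)
  have hy := h y (by simp)
  rcases hx with hx | hx <;> rcases hy with hy | hy <;> subst hx <;> subst hy
  · simp [List.count_cons] at hcb
  · left; rfl
  · right; rfl
  · simp [List.count_cons] at hcb'

lemma chain'_of_append_right {l1 l2 : List α} {R : α → α → Prop}
    (h : (l1 ++ l2).Chain' R) : l2.Chain' R :=
  (List.isChain_append.mp h).2.1

lemma blockchain {x y : α} (hne : x ≠ y) :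
    ∀ (L : List (List α)) (c0 : List α), (∀ c ∈ L, c = [x,y] ∨ c = [y,x]) →
    L.head? = some c0 → ¬ (L.flatten ++ c0.reverse).Chain' (· ≠ ·) := by
  intro L
  induction L with
  | nil => intro c0 _ h; simp at h
  | cons c L' ih =>
    intro c0 hmem hhead
    have hc0 : c0 = c := by
      simp only [List.head?_cons, Option.some.injEq] at hhead
      exact hhead.symm
    subst hc0
    rcases L' with _ | ⟨c2, L''⟩
    · rcases hmem c0 (by simp) with hc | hc <;> subst hc
      · exact not_chain'_of_infix_pair (x := y) ⟨[x], [x], by simp⟩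
      · exact not_chain'_of_infix_pair (x := x) ⟨[y], [y], by simp⟩
    · rcases hmem c0 (by simp) with hc | hc <;>
        rcases hmem c2 (by simp) with hc2 | hc2
      · -- c = c2 = [x,y]
        intro hch
        refine ih c2 (fun d hd => hmem d (List.mem_cons_of_mem _ hd)) rfl ?_
        apply chain'_of_append_right (l1 := c0)
        have : (c0 :: c2 :: L'').flatten ++ c0.reverse =
            c0 ++ ((c2 :: L'').flatten ++ c2.reverse) := by
          rw [hc, hc2]; simp
        rw [← this]; exact hch
      · -- c = [x,y], c2 = [y,x]
        subst hc; subst hc2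
        exact not_chain'_of_infix_pair (x := y)
          ⟨[x], [x] ++ L''.flatten ++ [x,y].reverse, by simp⟩
      · subst hc; subst hc2
        exact not_chain'_of_infix_pair (x := x)
          ⟨[y], [y] ++ L''.flatten ++ [y,x].reverse, by simp⟩
      · intro hch
        refine ih c2 (fun d hd => hmem d (List.mem_cons_of_mem _ hd)) rfl ?_
        apply chain'_of_append_right (l1 := c0)
        have : (c0 :: c2 :: L'').flatten ++ c0.reverse =
            c0 ++ ((c2 :: L'').flatten ++ c2.reverse) := by
          rw [hc, hc2]; simp
        rw [← this]; exact hch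

end DecEq


structure Ctx (V : Type*) [DecidableEq V] where
  G : SimpleGraph V
  ps : List (V × V)
  bs : List V
  d : V × V

namespace Ctx
variable {V : Type*} [DecidableEq V] (c : Ctx V)

def f2 : V × V → List V := fun p => [p.1, p.2]
def g2 : V × V → List V := fun p => [p.2, p.1]

noncomputable def adjb (x y : V) : Bool := @decide (c.G.Adj x y) (Classical.propDecidable _)

lemma adjb_iff {x y : V} : c.adjb x y = true ↔ c.G.Adj x y := by
  unfold adjb
  exact @decide_eq_true_iff _ (Classical.propDecidable _)

def K : ℕ := c.ps.length
def pa (s : ℕ) : V := (c.ps.getD s c.d).1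
def pb (s : ℕ) : V := (c.ps.getD s c.d).2
def AS : List V := c.ps.flatMap f2
def Lp (s : ℕ) : List V := (c.ps.drop (s+1)).flatMap g2
def Rp (s : ℕ) : List V := (c.ps.take s).flatMap g2
noncomputable def Wl (s : ℕ) : List V :=
  c.bs.filter fun x => !c.adjb (c.pa s) x && !c.adjb (c.pb s) x
noncomputable def Xl (s : ℕ) : List V :=
  c.bs.filter fun x => c.adjb (c.pa s) x && !c.adjb (c.pb s) x
noncomputable def Yl (s : ℕ) : List V :=
  c.bs.filter fun x => c.adjb (c.pa s) x && c.adjb (c.pb s) x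
noncomputable def Zl (s : ℕ) : List V :=
  c.bs.filter fun x => !c.adjb (c.pa s) x && c.adjb (c.pb s) x
noncomputable def Bp (s : ℕ) : List V := c.Wl s ++ c.Xl s ++ c.Yl s ++ c.Zl s
noncomputable def rnd (s : ℕ) : List V :=
  c.Lp s ++ c.Wl s ++ [c.pa s] ++ c.Xl s ++ [c.pb s] ++ c.Yl s ++ [c.pa s] ++
    c.Zl s ++ [c.pb s] ++ c.Rp s
noncomputable def SS (u : ℕ) : List V := (List.range (c.K - u)).flatMap fun i => c.rnd (u + i)
noncomputable def FF : List V := (c.Bp 0).reverse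
noncomputable def wd : List V := c.SS 0 ++ c.FF

def Good : Prop :=
  (c.AS ++ c.bs).Nodup ∧ 2 ≤ c.K ∧
    (∀ u ∈ c.AS, ∀ v ∈ c.AS, ¬ c.G.Adj u v) ∧ (∀ u ∈ c.bs, ∀ v ∈ c.bs, ¬ c.G.Adj u v)

/-- `a` is an `A`-vertex belonging to pair `t`. -/
def isIdx (a : V) (t : ℕ) : Prop := t < c.K ∧ (a = c.pa t ∨ a = c.pb t)

lemma SS_eq_nil {u : ℕ} (h : c.K ≤ u) : c.SS u = [] := by
  rw [SS, Nat.sub_eq_zero_of_le h]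
  rfl

lemma SS_succ {u : ℕ} (h : u < c.K) : c.SS u = c.rnd u ++ c.SS (u+1) := by
  have h1 : c.K - u = (c.K - (u+1)) + 1 := by omega
  have h2 : (fun i => c.rnd (u + Nat.succ i)) = (fun i => c.rnd (u + 1 + i)) := by
    funext i
    have h3 : u + Nat.succ i = u + 1 + i := by omega
    rw [h3]
  rw [SS, SS, h1, List.range_succ_eq_map, List.flatMap_cons, List.flatMap_map, h2, Nat.add_zero]

lemma SS0_split {u : ℕ} (h : u ≤ c.K) : ∃ pre, c.SS 0 = pre ++ c.SS u := by
  induction u with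
  | zero => exact ⟨[], rfl⟩
  | succ k ih =>
    obtain ⟨pre, hpre⟩ := ih (by omega)
    refine ⟨pre ++ c.rnd k, ?_⟩
    rw [hpre, c.SS_succ (by omega), List.append_assoc]

lemma wd_split {t : ℕ} (h : t < c.K) :
    ∃ pre, c.wd = pre ++ (c.rnd t ++ (c.SS (t+1) ++ c.FF)) := by
  obtain ⟨pre, hpre⟩ := c.SS0_split (le_of_lt h)
  refine ⟨pre, ?_⟩
  rw [wd, hpre, c.SS_succ h]
  simp [List.append_assoc]

lemma wd_split2 {t : ℕ} (h : t + 1 < c.K) :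
    ∃ pre, c.wd = pre ++ (c.rnd t ++ (c.rnd (t+1) ++ (c.SS (t+2) ++ c.FF))) := by
  obtain ⟨pre, hpre⟩ := c.SS0_split (le_of_lt (by omega : t < c.K))
  refine ⟨pre, ?_⟩
  rw [wd, hpre, c.SS_succ (by omega : t < c.K), c.SS_succ h]
  simp [List.append_assoc]

/-! ### Basic facts from `Good` -/

variable {c}

lemma Good.ndA (hc : c.Good) : c.AS.Nodup := hc.1.of_append_left
lemma Good.ndb (hc : c.Good) : c.bs.Nodup := hc.1.of_append_right
lemma Good.disjAb (hc : c.Good) : ∀ x ∈ c.AS, x ∉ c.bs :=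
  fun x hx => List.disjoint_of_nodup_append hc.1 hx

variable (c)

lemma getD_eq {t : ℕ} (h : t < c.K) : c.ps.getD t c.d = c.ps[t]'h :=
  List.getD_eq_getElem c.ps c.d h

lemma AS_split (u : ℕ) :
    c.AS = (c.ps.take u).flatMap f2 ++ (c.ps.drop u).flatMap f2 := by
  rw [AS, ← List.flatMap_append, List.take_append_drop]

lemma mem_take_f {t u : ℕ} (htK : t < c.K) (htu : t < u) :
    c.pa t ∈ (c.ps.take u).flatMap f2 ∧ c.pb t ∈ (c.ps.take u).flatMap f2 := by
  have hK : t < c.ps.length := htK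
  have hlen : t < (c.ps.take u).length := by
    rw [List.length_take]; omega
  have hel : (c.ps.take u)[t]'hlen = c.ps[t]'hK := List.getElem_take
  have hmem : c.ps[t]'hK ∈ c.ps.take u := by
    rw [← hel]; exact List.getElem_mem _
  constructor
  · exact List.mem_flatMap.mpr ⟨c.ps[t]'hK, hmem, by
      rw [pa, c.getD_eq htK]; exact List.mem_cons_self⟩
  · exact List.mem_flatMap.mpr ⟨c.ps[t]'hK, hmem, by
      rw [pb, c.getD_eq htK]; simp [f2]; exact Or.inr rfl⟩

lemma mem_drop_f {t u : ℕ} (htK : t < c.K) (hut : u ≤ t) :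
    c.pa t ∈ (c.ps.drop u).flatMap f2 ∧ c.pb t ∈ (c.ps.drop u).flatMap f2 := by
  have hK : t < c.ps.length := htK
  have hlen : t - u < (c.ps.drop u).length := by
    rw [List.length_drop]; omega
  have hel : (c.ps.drop u)[t-u]'hlen = c.ps[t]'hK := by
    rw [List.getElem_drop]
    congr 1; omega
  have hmem : c.ps[t]'hK ∈ c.ps.drop u := by
    rw [← hel]; exact List.getElem_mem _
  constructor
  · exact List.mem_flatMap.mpr ⟨c.ps[t]'hK, hmem, by
      rw [pa, c.getD_eq htK]; exact List.mem_cons_self⟩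
  · exact List.mem_flatMap.mpr ⟨c.ps[t]'hK, hmem, by
      rw [pb, c.getD_eq htK]; simp [f2]; exact Or.inr rfl⟩

lemma mem_AS_of_idx {a : V} {t : ℕ} (h : c.isIdx a t) : a ∈ c.AS := by
  rw [c.AS_split (t+1)]
  rcases h.2 with h2 | h2 <;> subst h2
  · exact List.mem_append_left _ (c.mem_take_f h.1 (by omega)).1
  · exact List.mem_append_left _ (c.mem_take_f h.1 (by omega)).2

lemma mem_AS_index {a : V} (ha : a ∈ c.AS) : ∃ t, c.isIdx a t := by
  rw [AS] at ha
  obtain ⟨p, hp, hap⟩ := List.mem_flatMap.mp ha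
  obtain ⟨t, ht, hpt⟩ := List.mem_iff_getElem.mp hp
  refine ⟨t, ht, ?_⟩
  rw [pa, pb, c.getD_eq ht, hpt]
  simp [f2] at hap
  rcases hap with h | h
  · left; exact h
  · right; exact h

lemma count_g_eq_f (l : List (V × V)) (x : V) :
    (l.flatMap g2).count x = (l.flatMap f2).count x := by
  induction l with
  | nil => rfl
  | cons p ps ih =>
    rw [List.flatMap_cons, List.flatMap_cons, List.count_append, List.count_append, ih]
    have : (g2 p).count x = (f2 p).count x := by
      simp [g2, f2, List.count_cons]
      omega
    omega

lemma mem_g_f {l : List (V × V)} {x : V} (h : x ∈ l.flatMap g2) : x ∈ l.flatMap f2 := by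
  obtain ⟨p, hp, hxp⟩ := List.mem_flatMap.mp h
  refine List.mem_flatMap.mpr ⟨p, hp, ?_⟩
  simp [g2] at hxp
  simp [f2]
  tauto

variable {c}

lemma Good.countAS (hc : c.Good) {x : V} (hx : x ∈ c.AS) : c.AS.count x = 1 :=
  List.count_eq_one_of_mem hc.ndA hx

lemma Good.count_take_drop (hc : c.Good) {a : V} {t : ℕ} (h : c.isIdx a t) (u : ℕ) :
    ((c.ps.take u).flatMap f2).count a = (if t < u then 1 else 0) ∧
    ((c.ps.drop u).flatMap f2).count a = (if t < u then 0 else 1) := by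
  have hmem : a ∈ c.AS := c.mem_AS_of_idx h
  have hsum : ((c.ps.take u).flatMap f2).count a + ((c.ps.drop u).flatMap f2).count a = 1 := by
    rw [← List.count_append, ← c.AS_split u]
    exact hc.countAS hmem
  by_cases htu : t < u
  · have hm : a ∈ (c.ps.take u).flatMap f2 := by
      rcases h.2 with h2 | h2 <;> subst h2
      · exact (c.mem_take_f h.1 htu).1
      · exact (c.mem_take_f h.1 htu).2
    have := List.count_pos_iff.mpr hm
    simp only [if_pos htu]
    omega
  · have hm : a ∈ (c.ps.drop u).flatMap f2 := by
      rcases h.2 with h2 | h2 <;> subst h2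
      · exact (c.mem_drop_f h.1 (by omega)).1
      · exact (c.mem_drop_f h.1 (by omega)).2
    have := List.count_pos_iff.mpr hm
    simp only [if_neg htu]
    omega

lemma Good.count_Lp (hc : c.Good) {a : V} {t : ℕ} (h : c.isIdx a t) (s : ℕ) :
    (c.Lp s).count a = if s < t then 1 else 0 := by
  rw [Lp, count_g_eq_f]
  have := (hc.count_take_drop h (s+1)).2
  rw [this]
  by_cases hst : s < t
  · rw [if_pos hst, if_neg (by omega)]
  · rw [if_neg hst, if_pos (by omega)]

lemma Good.count_Rp (hc : c.Good) {a : V} {t : ℕ} (h : c.isIdx a t) (s : ℕ) :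
    (c.Rp s).count a = if t < s then 1 else 0 := by
  rw [Rp, count_g_eq_f]
  have := (hc.count_take_drop h s).1
  rw [this]

lemma mem_Lp_AS {x : V} {s : ℕ} (hx : x ∈ c.Lp s) : x ∈ c.AS := by
  rw [c.AS_split (s+1)]
  exact List.mem_append_right _ (mem_g_f hx)

lemma mem_Rp_AS {x : V} {s : ℕ} (hx : x ∈ c.Rp s) : x ∈ c.AS := by
  rw [c.AS_split s]
  exact List.mem_append_left _ (mem_g_f hx)

variable (c)

lemma AS_decomp {t : ℕ} (ht : t < c.K) :
    c.AS = (c.ps.take t).flatMap f2 ++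
      ([c.pa t] ++ ([c.pb t] ++ (c.ps.drop (t+1)).flatMap f2)) := by
  have hps : c.ps = c.ps.take t ++ (c.ps[t]'ht) :: c.ps.drop (t+1) := by
    conv_lhs => rw [← List.take_append_drop t c.ps]
    congr 1
    exact (List.getElem_cons_drop ht).symm
  conv_lhs => rw [AS, hps]
  rw [List.flatMap_append, List.flatMap_cons]
  congr 1
  rw [pa, pb, c.getD_eq ht]
  rfl

variable {c}

lemma Good.pair_ne (hc : c.Good) {t : ℕ} (ht : t < c.K) : c.pa t ≠ c.pb t := by
  have h := hc.ndA
  rw [c.AS_decomp ht] at h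
  have h2 := h.of_append_right
  rw [show [c.pa t] ++ ([c.pb t] ++ (c.ps.drop (t+1)).flatMap f2) =
    c.pa t :: c.pb t :: (c.ps.drop (t+1)).flatMap f2 by rfl] at h2
  intro he
  exact (List.nodup_cons.mp h2).1 (he ▸ List.mem_cons_self)

lemma Good.cross_ne (hc : c.Good) {s t : ℕ} (hs : s < c.K) (ht : t < c.K) (hst : s ≠ t) :
    c.pa s ≠ c.pa t ∧ c.pa s ≠ c.pb t ∧ c.pb s ≠ c.pa t ∧ c.pb s ≠ c.pb t := by
  have key : ∀ {s' t' : ℕ}, s' < c.K → t' < c.K → s' < t' →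
      c.pa s' ≠ c.pa t' ∧ c.pa s' ≠ c.pb t' ∧ c.pb s' ≠ c.pa t' ∧ c.pb s' ≠ c.pb t' := by
    intro s' t' hs' ht' hlt
    have hnd : ((c.ps.take (s'+1)).flatMap f2).Disjoint ((c.ps.drop (s'+1)).flatMap f2) := by
      apply List.disjoint_of_nodup_append
      rw [← c.AS_split (s'+1)]
      exact hc.ndA
    have h1 := (c.mem_take_f hs' (Nat.lt_succ_self s')).1
    have h2 := (c.mem_take_f hs' (Nat.lt_succ_self s')).2
    have h3 := (c.mem_drop_f ht' (by omega : s' + 1 ≤ t')).1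
    have h4 := (c.mem_drop_f ht' (by omega : s' + 1 ≤ t')).2
    refine ⟨?_, ?_, ?_, ?_⟩ <;> intro he
    · exact hnd h1 (he ▸ h3)
    · exact hnd h1 (he ▸ h4)
    · exact hnd h2 (he ▸ h3)
    · exact hnd h2 (he ▸ h4)
  rcases Nat.lt_or_ge s t with hlt | hge
  · exact key hs ht hlt
  · have hlt : t < s := by omega
    obtain ⟨k1, k2, k3, k4⟩ := key ht hs hlt
    exact ⟨k1.symm, k3.symm, k2.symm, k4.symm⟩

lemma Good.ne_of_mem_bs (hc : c.Good) {a b : V} (ha : a ∈ c.AS) (hb : b ∈ c.bs) : a ≠ b :=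
  fun he => hc.disjAb a ha (he ▸ hb)

/-! ### B-side lemmas -/

lemma mem_Wl_bs {x : V} {s : ℕ} (h : x ∈ c.Wl s) : x ∈ c.bs := (List.mem_filter.mp h).1
lemma mem_Xl_bs {x : V} {s : ℕ} (h : x ∈ c.Xl s) : x ∈ c.bs := (List.mem_filter.mp h).1
lemma mem_Yl_bs {x : V} {s : ℕ} (h : x ∈ c.Yl s) : x ∈ c.bs := (List.mem_filter.mp h).1
lemma mem_Zl_bs {x : V} {s : ℕ} (h : x ∈ c.Zl s) : x ∈ c.bs := (List.mem_filter.mp h).1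

lemma mem_Bp_bs {x : V} {s : ℕ} (h : x ∈ c.Bp s) : x ∈ c.bs := by
  rw [Bp] at h
  rcases List.mem_append.mp h with h | h
  rcases List.mem_append.mp h with h | h
  rcases List.mem_append.mp h with h | h
  · exact mem_Wl_bs h
  · exact mem_Xl_bs h
  · exact mem_Yl_bs h
  · exact mem_Zl_bs h

lemma count_filter' {l : List V} {p : V → Bool} {x : V} :
    (l.filter p).count x = if p x = true then l.count x else 0 := by
  by_cases hp : p x = true
  · rw [if_pos hp, List.count_filter hp]
  · rw [if_neg hp, List.count_eq_zero]
    intro hm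
    exact hp (List.of_mem_filter hm)

lemma Good.count_Bp (hc : c.Good) {x : V} (hx : x ∈ c.bs) (s : ℕ) :
    (c.Bp s).count x = 1 := by
  have hcnt : c.bs.count x = 1 := List.count_eq_one_of_mem hc.ndb hx
  rw [Bp, List.count_append, List.count_append, List.count_append, Wl, Xl, Yl, Zl,
    count_filter', count_filter', count_filter', count_filter']
  cases h1 : c.adjb (c.pa s) x <;> cases h2 : c.adjb (c.pb s) x <;>
    simp [h1, h2, hcnt]

lemma Good.count_Bp_zero (hc : c.Good) {x : V} (hx : x ∈ c.AS) (s : ℕ) :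
    (c.Bp s).count x = 0 := by
  rw [List.count_eq_zero]
  intro hm
  exact hc.disjAb x hx (mem_Bp_bs hm)

variable (c)

lemma mem_pa_AS {s : ℕ} (hs : s < c.K) : c.pa s ∈ c.AS :=
  c.mem_AS_of_idx ⟨hs, Or.inl rfl⟩
lemma mem_pb_AS {s : ℕ} (hs : s < c.K) : c.pb s ∈ c.AS :=
  c.mem_AS_of_idx ⟨hs, Or.inr rfl⟩

lemma filter_single_ne {x a b : V} (hxa : x ≠ a) (hxb : x ≠ b) :
    [x].filter (fun y => y = a ∨ y = b) = [] := by simp [hxa, hxb]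

lemma filter_single_mem {x a b : V} (h : x = a ∨ x = b) :
    [x].filter (fun y => y = a ∨ y = b) = [x] := by
  rcases h with rfl | rfl <;> simp

variable {c}

lemma Good.filter_Lp (hc : c.Good) {a b : V} {t : ℕ} (h : c.isIdx a t) (hb : b ∈ c.bs)
    (s : ℕ) :
    (c.Lp s).filter (fun x => x = a ∨ x = b) = if s < t then [a] else [] := by
  by_cases hst : s < t
  · rw [if_pos hst]
    apply filter_eq_single
    · intro x hx hq
      simp only [decide_eq_true_eq] at hq
      rcases hq with rfl | rfl
      · rfl
      · exact absurd hb (hc.disjAb x (c.mem_Lp_AS hx))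
    · rw [hc.count_Lp h s, if_pos hst]
    · simp
  · rw [if_neg hst, List.filter_eq_nil_iff]
    intro x hx
    have hxA := c.mem_Lp_AS hx
    simp only [decide_eq_true_eq]
    rintro (rfl | rfl)
    · have hcnt := hc.count_Lp h s
      rw [if_neg hst] at hcnt
      have := List.count_pos_iff.mpr hx
      omega
    · exact hc.disjAb x hxA hb

lemma Good.filter_Rp (hc : c.Good) {a b : V} {t : ℕ} (h : c.isIdx a t) (hb : b ∈ c.bs)
    (s : ℕ) :
    (c.Rp s).filter (fun x => x = a ∨ x = b) = if t < s then [a] else [] := by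
  by_cases hst : t < s
  · rw [if_pos hst]
    apply filter_eq_single
    · intro x hx hq
      simp only [decide_eq_true_eq] at hq
      rcases hq with rfl | rfl
      · rfl
      · exact absurd hb (hc.disjAb x (c.mem_Rp_AS hx))
    · rw [hc.count_Rp h s, if_pos hst]
    · simp
  · rw [if_neg hst, List.filter_eq_nil_iff]
    intro x hx
    have hxA := c.mem_Rp_AS hx
    simp only [decide_eq_true_eq]
    rintro (rfl | rfl)
    · have hcnt := hc.count_Rp h s
      rw [if_neg hst] at hcnt
      have := List.count_pos_iff.mpr hx
      omega
    · exact hc.disjAb x hxA hb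

lemma Good.filter_bseg (hc : c.Good) {a b : V} (ha : a ∉ c.bs) (hb : b ∈ c.bs)
    (pr : V → Bool) :
    ((c.bs.filter pr).filter (fun x => x = a ∨ x = b)) =
      if pr b = true then [b] else [] := by
  by_cases hpr : pr b = true
  · rw [if_pos hpr]
    apply filter_eq_single
    · intro x hx hq
      simp only [decide_eq_true_eq] at hq
      rcases hq with rfl | rfl
      · exact absurd (List.mem_of_mem_filter hx) ha
      · rfl
    · rw [count_filter', if_pos hpr]
      exact List.count_eq_one_of_mem hc.ndb hb
    · simp
  · rw [if_neg hpr, List.filter_eq_nil_iff]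
    intro x hx
    simp only [decide_eq_true_eq]
    rintro (rfl | rfl)
    · exact ha (List.mem_of_mem_filter hx)
    · exact hpr (List.of_mem_filter hx)

lemma Good.filter_Bp (hc : c.Good) {a b : V} (ha : a ∉ c.bs) (hb : b ∈ c.bs) (s : ℕ) :
    (c.Bp s).filter (fun x => x = a ∨ x = b) = [b] := by
  apply filter_eq_single
  · intro x hx hq
    simp only [decide_eq_true_eq] at hq
    rcases hq with rfl | rfl
    · exact absurd (c.mem_Bp_bs hx) ha
    · rfl
  · exact hc.count_Bp hb s
  · simp

lemma round_shape {a b : V} (s : ℕ) (hpa1 : c.pa s ≠ a) (hpa2 : c.pa s ≠ b)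
    (hpb1 : c.pb s ≠ a) (hpb2 : c.pb s ≠ b) :
    (c.rnd s).filter (fun x => x = a ∨ x = b) =
      (c.Lp s).filter (fun x => x = a ∨ x = b) ++
        ((c.Bp s).filter (fun x => x = a ∨ x = b) ++
          (c.Rp s).filter (fun x => x = a ∨ x = b)) := by
  rw [rnd, Bp]
  simp only [List.filter_append]
  rw [filter_single_ne hpa1 hpa2, filter_single_ne hpb1 hpb2]
  simp [List.append_assoc]

lemma Good.idx_ne (hc : c.Good) {a b : V} {t s : ℕ} (h : c.isIdx a t) (hb : b ∈ c.bs)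
    (hs : s < c.K) (hst : s ≠ t) :
    c.pa s ≠ a ∧ c.pa s ≠ b ∧ c.pb s ≠ a ∧ c.pb s ≠ b := by
  have hcr := hc.cross_ne hs h.1 hst
  have h1 : c.pa s ≠ b := hc.ne_of_mem_bs (c.mem_pa_AS hs) hb
  have h2 : c.pb s ≠ b := hc.ne_of_mem_bs (c.mem_pb_AS hs) hb
  rcases h.2 with rfl | rfl
  · exact ⟨hcr.1, h1, hcr.2.2.1, h2⟩
  · exact ⟨hcr.2.1, h1, hcr.2.2.2, h2⟩

lemma Good.round_lt (hc : c.Good) {a b : V} {t s : ℕ} (h : c.isIdx a t) (hb : b ∈ c.bs)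
    (hs : s < c.K) (hst : s < t) :
    (c.rnd s).filter (fun x => x = a ∨ x = b) = [a, b] := by
  obtain ⟨h1, h2, h3, h4⟩ := hc.idx_ne h hb hs (by omega)
  have ha : a ∉ c.bs := fun hm => hc.disjAb a (c.mem_AS_of_idx h) hm
  rw [c.round_shape s h1 h2 h3 h4, hc.filter_Lp h hb s, if_pos hst,
    hc.filter_Bp ha hb s, hc.filter_Rp h hb s, if_neg (by omega)]
  rfl

lemma Good.round_gt (hc : c.Good) {a b : V} {t s : ℕ} (h : c.isIdx a t) (hb : b ∈ c.bs)
    (hs : s < c.K) (hst : t < s) :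
    (c.rnd s).filter (fun x => x = a ∨ x = b) = [b, a] := by
  obtain ⟨h1, h2, h3, h4⟩ := hc.idx_ne h hb hs (by omega)
  have ha : a ∉ c.bs := fun hm => hc.disjAb a (c.mem_AS_of_idx h) hm
  rw [c.round_shape s h1 h2 h3 h4, hc.filter_Lp h hb s, if_neg (by omega),
    hc.filter_Bp ha hb s, hc.filter_Rp h hb s, if_pos hst]
  rfl

lemma Good.round_edge (hc : c.Good) {a b : V} {t : ℕ} (h : c.isIdx a t) (hb : b ∈ c.bs)
    (hadj : c.G.Adj a b) :
    (c.rnd t).filter (fun x => x = a ∨ x = b) = [a, b, a] := by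
  have ha : a ∉ c.bs := fun hm => hc.disjAb a (c.mem_AS_of_idx h) hm
  have hLp : (c.Lp t).filter (fun x => x = a ∨ x = b) = [] := by
    rw [hc.filter_Lp h hb t, if_neg (lt_irrefl t)]
  have hRp : (c.Rp t).filter (fun x => x = a ∨ x = b) = [] := by
    rw [hc.filter_Rp h hb t, if_neg (lt_irrefl t)]
  have hpane : c.pa t ≠ c.pb t := hc.pair_ne h.1
  have hpab : c.pa t ≠ b := hc.ne_of_mem_bs (c.mem_pa_AS h.1) hb
  have hpbb : c.pb t ≠ b := hc.ne_of_mem_bs (c.mem_pb_AS h.1) hb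
  rcases h.2 with rfl | rfl
  · -- a = pa t
    have hadjb : c.adjb (c.pa t) b = true := c.adjb_iff.mpr hadj
    have hW : (c.Wl t).filter (fun x => x = c.pa t ∨ x = b) = [] := by
      rw [Wl, hc.filter_bseg ha hb, if_neg (by simp [hadjb])]
    have hZ : (c.Zl t).filter (fun x => x = c.pa t ∨ x = b) = [] := by
      rw [Zl, hc.filter_bseg ha hb, if_neg (by simp [hadjb])]
    have hpaf : [c.pa t].filter (fun x => x = c.pa t ∨ x = b) = [c.pa t] :=
      filter_single_mem (Or.inl rfl)
    have hpbf : [c.pb t].filter (fun x => x = c.pa t ∨ x = b) = [] :=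
      filter_single_ne hpane.symm hpbb
    rw [rnd]
    simp only [List.filter_append]
    rw [hLp, hRp, hW, hZ, hpaf, hpbf]
    have hX := hc.filter_bseg (c := c) ha hb
      (fun x => c.adjb (c.pa t) x && !c.adjb (c.pb t) x)
    have hY := hc.filter_bseg (c := c) ha hb
      (fun x => c.adjb (c.pa t) x && c.adjb (c.pb t) x)
    cases h2 : c.adjb (c.pb t) b
    · rw [Xl, hX, if_pos (by simp [hadjb, h2]), Yl, hY, if_neg (by simp [h2])]
      rfl
    · rw [Xl, hX, if_neg (by simp [h2]), Yl, hY, if_pos (by simp [hadjb, h2])]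
      rfl
  · -- a = pb t
    have hadjb : c.adjb (c.pb t) b = true := c.adjb_iff.mpr hadj
    have hW : (c.Wl t).filter (fun x => x = c.pb t ∨ x = b) = [] := by
      rw [Wl, hc.filter_bseg ha hb, if_neg (by simp [hadjb])]
    have hX : (c.Xl t).filter (fun x => x = c.pb t ∨ x = b) = [] := by
      rw [Xl, hc.filter_bseg ha hb, if_neg (by simp [hadjb])]
    have hpaf : [c.pa t].filter (fun x => x = c.pb t ∨ x = b) = [] :=
      filter_single_ne hpane hpab
    have hpbf : [c.pb t].filter (fun x => x = c.pb t ∨ x = b) = [c.pb t] :=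
      filter_single_mem (Or.inl rfl)
    rw [rnd]
    simp only [List.filter_append]
    rw [hLp, hRp, hW, hX, hpaf, hpbf]
    have hY := hc.filter_bseg (c := c) ha hb
      (fun x => c.adjb (c.pa t) x && c.adjb (c.pb t) x)
    have hZ := hc.filter_bseg (c := c) ha hb
      (fun x => !c.adjb (c.pa t) x && c.adjb (c.pb t) x)
    cases h2 : c.adjb (c.pa t) b
    · rw [Yl, hY, if_neg (by simp [h2]), Zl, hZ, if_pos (by simp [hadjb, h2])]
      rfl
    · rw [Yl, hY, if_pos (by simp [hadjb, h2]), Zl, hZ, if_neg (by simp [h2])]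
      rfl

lemma Good.filter_FF (hc : c.Good) {a b : V} (ha : a ∉ c.bs) (hb : b ∈ c.bs) :
    c.FF.filter (fun x => x = a ∨ x = b) = [b] := by
  rw [FF, List.filter_reverse, hc.filter_Bp ha hb 0]
  rfl

lemma Good.SS_filter_gt (hc : c.Good) {a b : V} {t : ℕ} (h : c.isIdx a t) (hb : b ∈ c.bs) :
    ∀ r u, u + r = c.K → t < u →
    (c.SS u).filter (fun x => x = a ∨ x = b) = alt b a (2*r) := by
  intro r
  induction r with
  | zero =>
    intro u hu _
    rw [c.SS_eq_nil (by omega)]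
    rfl
  | succ k ih =>
    intro u hu htu
    rw [c.SS_succ (by omega), List.filter_append, hc.round_gt h hb (by omega) htu,
      ih (u+1) (by omega) (by omega)]
    have : 2 * (k+1) = 2*k + 2 := by omega
    rw [this, alt_two]
    rfl

lemma Good.SS_filter_le (hc : c.Good) {a b : V} {t : ℕ} (h : c.isIdx a t) (hb : b ∈ c.bs)
    (hadj : c.G.Adj a b) :
    ∀ r u, u + r = c.K → u ≤ t →
    (c.SS u).filter (fun x => x = a ∨ x = b) =
      alt a b (2*(t-u)) ++ ([a, b, a] ++ alt b a (2*(c.K-1-t))) := by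
  intro r
  induction r with
  | zero =>
    intro u hu htu
    exact absurd h.1 (by omega)
  | succ k ih =>
    intro u hu htu
    rcases Nat.eq_or_lt_of_le htu with heq | hlt
    · subst heq
      rw [c.SS_succ (by omega), List.filter_append, hc.round_edge h hb hadj,
        hc.SS_filter_gt h hb k (u+1) (by omega) (by omega)]
      have h1 : 2 * (u - u) = 0 := by omega
      have h2 : c.K - 1 - u = k := by omega
      rw [h1, h2]
      rfl
    · rw [c.SS_succ (by omega), List.filter_append, hc.round_lt h hb (by omega) hlt,
        ih (u+1) (by omega) (by omega)]
      have h1 : 2 * (t - u) = (2 * (t - (u+1))) + 2 := by omega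
      rw [h1, alt_two]
      rfl

lemma Good.alternate_of_adj (hc : c.Good) {a b : V} {t : ℕ} (h : c.isIdx a t)
    (hb : b ∈ c.bs) (hadj : c.G.Adj a b) : Alternate c.wd a b := by
  have ha : a ∉ c.bs := fun hm => hc.disjAb a (c.mem_AS_of_idx h) hm
  have hab : a ≠ b := hc.ne_of_mem_bs (c.mem_AS_of_idx h) hb
  unfold Alternate
  rw [wd, List.filter_append, hc.SS_filter_le h hb hadj c.K 0 (by omega) (Nat.zero_le t),
    hc.filter_FF ha hb]
  set m := 2 * (c.K - 1 - t) with hm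
  have e1 : alt b a (m+1) = alt b a m ++ alt b a 1 := by
    rw [alt_add b a m 1, if_pos (by omega)]
  have e2 : alt a b (3 + (m+1)) = alt a b 3 ++ alt b a (m+1) := by
    rw [alt_add a b 3 (m+1), if_neg (by omega)]
  have e3 : alt a b (2*(t-0) + (3 + (m+1))) = alt a b (2*(t-0)) ++ alt a b (3 + (m+1)) := by
    rw [alt_add a b _ _, if_pos (by omega)]
  have hch := chain'_alt hab (2*(t-0) + (3 + (m+1)))
  rw [e3, e2, e1] at hch
  have h3 : alt a b 3 = [a, b, a] := rfl
  have h1 : alt b a 1 = [b] := rfl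
  rw [h3, h1] at hch
  simpa [List.append_assoc] using hch

variable (c)

lemma mem_Wl_adj {x : V} {s : ℕ} (hx : x ∈ c.Wl s) :
    c.adjb (c.pa s) x = false ∧ c.adjb (c.pb s) x = false := by
  have := (List.mem_filter.mp hx).2
  simp only [Bool.and_eq_true, Bool.not_eq_true'] at this
  exact this

lemma mem_Xl_adj {x : V} {s : ℕ} (hx : x ∈ c.Xl s) :
    c.adjb (c.pa s) x = true ∧ c.adjb (c.pb s) x = false := by
  have := (List.mem_filter.mp hx).2
  simp only [Bool.and_eq_true, Bool.not_eq_true'] at this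
  exact this

lemma mem_Yl_adj {x : V} {s : ℕ} (hx : x ∈ c.Yl s) :
    c.adjb (c.pa s) x = true ∧ c.adjb (c.pb s) x = true := by
  have := (List.mem_filter.mp hx).2
  simp only [Bool.and_eq_true, Bool.not_eq_true'] at this
  exact this

lemma mem_Zl_adj {x : V} {s : ℕ} (hx : x ∈ c.Zl s) :
    c.adjb (c.pa s) x = false ∧ c.adjb (c.pb s) x = true := by
  have := (List.mem_filter.mp hx).2
  simp only [Bool.and_eq_true, Bool.not_eq_true'] at this
  exact this

lemma Rp_zero : c.Rp 0 = [] := rfl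

lemma Rp_one (h : 0 < c.K) : c.Rp 1 = [c.pb 0] ++ [c.pa 0] := by
  rw [Rp]
  have h1 : c.ps.take 1 = [c.ps[0]'h] := by
    rw [List.take_succ, List.take_zero, List.getElem?_eq_getElem h]
    rfl
  rw [h1, List.flatMap_cons, List.flatMap_nil, pa, pb, c.getD_eq h]
  rfl

lemma Lp_pred {t : ℕ} (ht : t < c.K) (h1 : 1 ≤ t) :
    c.Lp (t-1) = [c.pb t] ++ ([c.pa t] ++ c.Lp t) := by
  rw [Lp, Lp]
  have h2 : t - 1 + 1 = t := by omega
  rw [h2]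
  have h3 : c.ps.drop t = (c.ps[t]'ht) :: c.ps.drop (t+1) :=
    (List.getElem_cons_drop ht).symm
  rw [h3, List.flatMap_cons, pa, pb, c.getD_eq ht]
  rfl

variable {c}

lemma Good.not_mem_Lp (hc : c.Good) {a : V} {t s : ℕ} (h : c.isIdx a t) (hst : t ≤ s) :
    a ∉ c.Lp s := by
  intro hm
  have hcnt := hc.count_Lp h s
  rw [if_neg (by omega)] at hcnt
  have := List.count_pos_iff.mpr hm
  omega

lemma Good.not_mem_Rp (hc : c.Good) {a : V} {t s : ℕ} (h : c.isIdx a t) (hst : s ≤ t) :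
    a ∉ c.Rp s := by
  intro hm
  have hcnt := hc.count_Rp h s
  rw [if_neg (by omega)] at hcnt
  have := List.count_pos_iff.mpr hm
  omega

lemma Good.kill_AB (hc : c.Good) {a b : V} {t : ℕ} (h : c.isIdx a t) (hb : b ∈ c.bs)
    (hnadj : ¬ c.G.Adj a b) : ¬ Alternate c.wd a b := by
  obtain ⟨pre, hpre⟩ := c.wd_split h.1
  have hbsne : ∀ y ∈ c.bs, y ≠ a := fun y hy =>
    fun he => hc.disjAb a (c.mem_AS_of_idx h) (he ▸ hy)
  rcases h.2 with rfl | rfl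
  · -- a = pa t
    apply not_alternate_of_double (x := c.pa t) (Or.inl rfl)
      (pre ++ (c.Lp t ++ c.Wl t))
      (c.Xl t ++ ([c.pb t] ++ c.Yl t))
      (c.Zl t ++ ([c.pb t] ++ (c.Rp t ++ (c.SS (t+1) ++ c.FF))))
    · rw [hpre, rnd]
      simp [List.append_assoc]
    · intro y hy
      rcases List.mem_append.mp hy with hy | hy
      · have hadj := (c.mem_Xl_adj hy).1
        refine ⟨hbsne y (c.mem_Xl_bs hy), fun he => hnadj ?_⟩
        subst he
        exact c.adjb_iff.mp hadj
      · rcases List.mem_append.mp hy with hy | hy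
        · have : y = c.pb t := by simpa using hy
          subst this
          exact ⟨(hc.pair_ne h.1).symm, hc.ne_of_mem_bs (c.mem_pb_AS h.1) hb⟩
        · have hadj := (c.mem_Yl_adj hy).1
          refine ⟨hbsne y (c.mem_Yl_bs hy), fun he => hnadj ?_⟩
          subst he
          exact c.adjb_iff.mp hadj
  · -- a = pb t
    apply not_alternate_of_double (x := c.pb t) (Or.inl rfl)
      (pre ++ (c.Lp t ++ (c.Wl t ++ ([c.pa t] ++ c.Xl t))))
      (c.Yl t ++ ([c.pa t] ++ c.Zl t))
      (c.Rp t ++ (c.SS (t+1) ++ c.FF))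
    · rw [hpre, rnd]
      simp [List.append_assoc]
    · intro y hy
      rcases List.mem_append.mp hy with hy | hy
      · have hadj := (c.mem_Yl_adj hy).2
        refine ⟨hbsne y (c.mem_Yl_bs hy), fun he => hnadj ?_⟩
        subst he
        exact c.adjb_iff.mp hadj
      · rcases List.mem_append.mp hy with hy | hy
        · have : y = c.pa t := by simpa using hy
          subst this
          exact ⟨hc.pair_ne h.1, hc.ne_of_mem_bs (c.mem_pa_AS h.1) hb⟩
        · have hadj := (c.mem_Zl_adj hy).2
          refine ⟨hbsne y (c.mem_Zl_bs hy), fun he => hnadj ?_⟩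
          subst he
          exact c.adjb_iff.mp hadj

lemma Good.kill_cross (hc : c.Good) {u v : V} {t : ℕ} (h : c.isIdx u t) (hv : v ∈ c.AS)
    (hv1 : v ≠ c.pa t) (hv2 : v ≠ c.pb t) : ¬ Alternate c.wd u v := by
  obtain ⟨pre, hpre⟩ := c.wd_split h.1
  have hbsu : ∀ y ∈ c.bs, y ≠ u ∧ y ≠ v := fun y hy =>
    ⟨fun he => hc.disjAb u (c.mem_AS_of_idx h) (he ▸ hy),
     fun he => hc.disjAb v hv (he ▸ hy)⟩
  rcases h.2 with rfl | rfl
  · apply not_alternate_of_double (x := c.pa t) (Or.inl rfl)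
      (pre ++ (c.Lp t ++ c.Wl t))
      (c.Xl t ++ ([c.pb t] ++ c.Yl t))
      (c.Zl t ++ ([c.pb t] ++ (c.Rp t ++ (c.SS (t+1) ++ c.FF))))
    · rw [hpre, rnd]
      simp [List.append_assoc]
    · intro y hy
      rcases List.mem_append.mp hy with hy | hy
      · exact hbsu y (c.mem_Xl_bs hy)
      · rcases List.mem_append.mp hy with hy | hy
        · have : y = c.pb t := by simpa using hy
          subst this
          exact ⟨(hc.pair_ne h.1).symm, fun he => hv2 he.symm⟩
        · exact hbsu y (c.mem_Yl_bs hy)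
  · apply not_alternate_of_double (x := c.pb t) (Or.inl rfl)
      (pre ++ (c.Lp t ++ (c.Wl t ++ ([c.pa t] ++ c.Xl t))))
      (c.Yl t ++ ([c.pa t] ++ c.Zl t))
      (c.Rp t ++ (c.SS (t+1) ++ c.FF))
    · rw [hpre, rnd]
      simp [List.append_assoc]
    · intro y hy
      rcases List.mem_append.mp hy with hy | hy
      · exact hbsu y (c.mem_Yl_bs hy)
      · rcases List.mem_append.mp hy with hy | hy
        · have : y = c.pa t := by simpa using hy
          subst this
          exact ⟨hc.pair_ne h.1, fun he => hv1 he.symm⟩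
        · exact hbsu y (c.mem_Zl_bs hy)

lemma Good.kill_same_pair (hc : c.Good) {t : ℕ} (ht : t < c.K) :
    ¬ Alternate c.wd (c.pa t) (c.pb t) := by
  have hbs : ∀ y ∈ c.bs, y ≠ c.pa t ∧ y ≠ c.pb t := fun y hy =>
    ⟨fun he => hc.disjAb _ (c.mem_pa_AS ht) (he ▸ hy),
     fun he => hc.disjAb _ (c.mem_pb_AS ht) (he ▸ hy)⟩
  rcases Nat.eq_zero_or_pos t with rfl | hpos
  · -- t = 0 : use the second β of round 0 and the β in Rp 1
    have hK2 : 1 < c.K := by have := hc.2.1; omega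
    obtain ⟨pre, hpre⟩ := c.wd_split2 (t := 0) (by omega)
    have hcr := hc.cross_ne (by omega : 1 < c.K) (by omega : 0 < c.K) (by omega)
    apply not_alternate_of_double (x := c.pb 0) (Or.inr rfl)
      (pre ++ (c.Lp 0 ++ (c.Wl 0 ++ ([c.pa 0] ++ (c.Xl 0 ++
        ([c.pb 0] ++ (c.Yl 0 ++ ([c.pa 0] ++ c.Zl 0))))))))
      (c.Lp 1 ++ (c.Wl 1 ++ ([c.pa 1] ++ (c.Xl 1 ++ ([c.pb 1] ++
        (c.Yl 1 ++ ([c.pa 1] ++ (c.Zl 1 ++ [c.pb 1]))))))))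
      ([c.pa 0] ++ (c.SS 2 ++ c.FF))
    · rw [hpre]
      simp only [rnd]
      rw [c.Rp_zero, c.Rp_one (by omega)]
      simp [List.append_assoc]
    · intro y hy
      simp only [List.mem_append, List.mem_singleton] at hy
      rcases hy with hy | hy | hy | hy | hy | hy | hy | hy | hy
      · constructor
        · exact fun he => hc.not_mem_Lp ⟨by omega, Or.inl rfl⟩ (by omega) (he ▸ hy)
        · exact fun he => hc.not_mem_Lp ⟨by omega, Or.inr rfl⟩ (by omega) (he ▸ hy)
      · exact hbs y (c.mem_Wl_bs hy)
      · subst hy; exact ⟨hcr.1, hcr.2.1⟩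
      · exact hbs y (c.mem_Xl_bs hy)
      · subst hy; exact ⟨hcr.2.2.1, hcr.2.2.2⟩
      · exact hbs y (c.mem_Yl_bs hy)
      · subst hy; exact ⟨hcr.1, hcr.2.1⟩
      · exact hbs y (c.mem_Zl_bs hy)
      · subst hy; exact ⟨hcr.2.2.1, hcr.2.2.2⟩
  · -- t ≥ 1 : use the α in Lp (t-1) and the first α of round t
    obtain ⟨pre, hpre⟩ := c.wd_split2 (t := t - 1) (by omega)
    have e1 : t - 1 + 1 = t := by omega
    have e2 : t - 1 + 2 = t + 1 := by omega
    rw [e1, e2] at hpre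
    have hcr := hc.cross_ne (by omega : t - 1 < c.K) ht (by omega)
    apply not_alternate_of_double (x := c.pa t) (Or.inl rfl)
      (pre ++ [c.pb t])
      (c.Lp t ++ (c.Wl (t-1) ++ ([c.pa (t-1)] ++ (c.Xl (t-1) ++ ([c.pb (t-1)] ++
        (c.Yl (t-1) ++ ([c.pa (t-1)] ++ (c.Zl (t-1) ++ ([c.pb (t-1)] ++
        (c.Rp (t-1) ++ (c.Lp t ++ c.Wl t)))))))))))
      (c.Xl t ++ ([c.pb t] ++ (c.Yl t ++ ([c.pa t] ++ (c.Zl t ++ ([c.pb t] ++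
        (c.Rp t ++ (c.SS (t+1) ++ c.FF))))))))
    · rw [hpre]
      simp only [rnd]
      rw [c.Lp_pred ht (by omega)]
      simp [List.append_assoc]
    · intro y hy
      simp only [List.mem_append, List.mem_singleton] at hy
      rcases hy with hy | hy | hy | hy | hy | hy | hy | hy | hy | hy | hy | hy
      · constructor
        · exact fun he => hc.not_mem_Lp ⟨ht, Or.inl rfl⟩ le_rfl (he ▸ hy)
        · exact fun he => hc.not_mem_Lp ⟨ht, Or.inr rfl⟩ le_rfl (he ▸ hy)
      · exact hbs y (c.mem_Wl_bs hy)
      · subst hy; exact ⟨hcr.1, hcr.2.1⟩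
      · exact hbs y (c.mem_Xl_bs hy)
      · subst hy; exact ⟨hcr.2.2.1, hcr.2.2.2⟩
      · exact hbs y (c.mem_Yl_bs hy)
      · subst hy; exact ⟨hcr.1, hcr.2.1⟩
      · exact hbs y (c.mem_Zl_bs hy)
      · subst hy; exact ⟨hcr.2.2.1, hcr.2.2.2⟩
      · constructor
        · exact fun he => hc.not_mem_Rp ⟨ht, Or.inl rfl⟩ (by omega) (he ▸ hy)
        · exact fun he => hc.not_mem_Rp ⟨ht, Or.inr rfl⟩ (by omega) (he ▸ hy)
      · constructor
        · exact fun he => hc.not_mem_Lp ⟨ht, Or.inl rfl⟩ le_rfl (he ▸ hy)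
        · exact fun he => hc.not_mem_Lp ⟨ht, Or.inr rfl⟩ le_rfl (he ▸ hy)
      · exact hbs y (c.mem_Wl_bs hy)

lemma Good.round_bb (hc : c.Good) {b b' : V} (hb : b ∈ c.bs) (hb' : b' ∈ c.bs)
    {s : ℕ} (hs : s < c.K) :
    (c.rnd s).filter (fun x => x = b ∨ x = b') =
      (c.Bp s).filter (fun x => x = b ∨ x = b') := by
  have hne1 : c.pa s ≠ b := hc.ne_of_mem_bs (c.mem_pa_AS hs) hb
  have hne2 : c.pa s ≠ b' := hc.ne_of_mem_bs (c.mem_pa_AS hs) hb'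
  have hne3 : c.pb s ≠ b := hc.ne_of_mem_bs (c.mem_pb_AS hs) hb
  have hne4 : c.pb s ≠ b' := hc.ne_of_mem_bs (c.mem_pb_AS hs) hb'
  rw [c.round_shape s hne1 hne2 hne3 hne4]
  have hL : (c.Lp s).filter (fun x => x = b ∨ x = b') = [] := by
    rw [List.filter_eq_nil_iff]
    intro x hx
    have hxA := c.mem_Lp_AS hx
    simp only [decide_eq_true_eq]
    rintro (rfl | rfl)
    · exact hc.disjAb x hxA hb
    · exact hc.disjAb x hxA hb'
  have hR : (c.Rp s).filter (fun x => x = b ∨ x = b') = [] := by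
    rw [List.filter_eq_nil_iff]
    intro x hx
    have hxA := c.mem_Rp_AS hx
    simp only [decide_eq_true_eq]
    rintro (rfl | rfl)
    · exact hc.disjAb x hxA hb
    · exact hc.disjAb x hxA hb'
  rw [hL, hR]
  simp

lemma Good.SS_filter_bb (hc : c.Good) {b b' : V} (hb : b ∈ c.bs) (hb' : b' ∈ c.bs) :
    ∀ r u, u + r = c.K →
    (c.SS u).filter (fun x => x = b ∨ x = b') =
      ((List.range r).map (fun i => (c.Bp (u+i)).filter (fun x => x = b ∨ x = b'))).flatten := by
  intro r
  induction r with
  | zero =>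
    intro u hu
    rw [c.SS_eq_nil (by omega)]
    rfl
  | succ k ih =>
    intro u hu
    rw [c.SS_succ (by omega), List.filter_append, hc.round_bb hb hb' (by omega),
      ih (u+1) (by omega), List.range_succ_eq_map, List.map_cons, List.map_map,
      List.flatten_cons, Nat.add_zero]
    have hfe : (fun i => (c.Bp (u + 1 + i)).filter (fun x => decide (x = b ∨ x = b'))) =
        ((fun i => (c.Bp (u + i)).filter (fun x => decide (x = b ∨ x = b'))) ∘ Nat.succ) := by
      funext i
      have he : u + 1 + i = u + Nat.succ i := by omega
      simp only [Function.comp_apply, he]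
    rw [hfe, Nat.add_zero]

lemma Good.Bp_filter_shape (hc : c.Good) {b b' : V} (hb : b ∈ c.bs) (hb' : b' ∈ c.bs)
    (hne : b ≠ b') (s : ℕ) :
    (c.Bp s).filter (fun x => x = b ∨ x = b') = [b, b'] ∨
    (c.Bp s).filter (fun x => x = b ∨ x = b') = [b', b] := by
  apply filter_pair hne
  · intro x hx
    have := List.of_mem_filter hx
    simpa using this
  · exact hc.count_Bp hb s
  · exact hc.count_Bp hb' s

lemma Good.kill_BB (hc : c.Good) {b b' : V} (hb : b ∈ c.bs) (hb' : b' ∈ c.bs)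
    (hne : b ≠ b') : ¬ Alternate c.wd b b' := by
  unfold Alternate
  rw [wd, List.filter_append, hc.SS_filter_bb hb hb' c.K 0 (by omega), FF,
    List.filter_reverse]
  set g : ℕ → List V := fun i => (c.Bp i).filter (fun x => x = b ∨ x = b') with hg
  have hzero : (fun i => (c.Bp (0+i)).filter (fun x => x = b ∨ x = b')) = g := by
    funext i
    rw [hg, Nat.zero_add]
  rw [hzero]
  obtain ⟨k, hk⟩ : ∃ k, c.K = k + 1 := ⟨c.K - 1, by have := hc.2.1; omega⟩
  rw [hk, List.range_succ_eq_map, List.map_cons]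
  apply blockchain (x := b) (y := b') hne
  · intro cblk hcblk
    rcases List.mem_cons.mp hcblk with h | h
    · rw [h, hg]
      exact hc.Bp_filter_shape hb hb' hne 0
    · obtain ⟨i, _, hi⟩ := List.mem_map.mp h
      rw [← hi]
      have : (List.map Nat.succ (List.range k)).length ≥ 0 := by omega
      show g _ = _ ∨ g _ = _
      rw [hg]
      exact hc.Bp_filter_shape hb hb' hne _
    
  · rfl

lemma count_sing_eq {x : V} : List.count x [x] = 1 := by
  rw [List.count_singleton]; simp

lemma count_sing_ne {x y : V} (h : y ≠ x) : List.count x [y] = 0 := by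
  rw [List.count_singleton]; simp [h]

lemma Good.count_rnd_A (hc : c.Good) {a : V} {t : ℕ} (h : c.isIdx a t) {s : ℕ}
    (hs : s < c.K) : (c.rnd s).count a = if s = t then 2 else 1 := by
  have haAS := c.mem_AS_of_idx h
  have hnbs : a ∉ c.bs := hc.disjAb a haAS
  have hW : (c.Wl s).count a = 0 := List.count_eq_zero.mpr fun hm => hnbs (c.mem_Wl_bs hm)
  have hX : (c.Xl s).count a = 0 := List.count_eq_zero.mpr fun hm => hnbs (c.mem_Xl_bs hm)
  have hY : (c.Yl s).count a = 0 := List.count_eq_zero.mpr fun hm => hnbs (c.mem_Yl_bs hm)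
  have hZ : (c.Zl s).count a = 0 := List.count_eq_zero.mpr fun hm => hnbs (c.mem_Zl_bs hm)
  have hL := hc.count_Lp h s
  have hR := hc.count_Rp h s
  rw [rnd]
  simp only [List.count_append]
  rw [hW, hX, hY, hZ, hL, hR]
  by_cases hst : s = t
  · subst hst
    rw [if_pos rfl, if_neg (lt_irrefl s)]
    rcases h.2 with rfl | rfl
    · rw [count_sing_eq, count_sing_ne (hc.pair_ne h.1).symm]
    · rw [count_sing_eq, count_sing_ne (hc.pair_ne h.1)]
  · have hcr := hc.cross_ne hs h.1 hst
    have h1 : c.pa s ≠ a := by rcases h.2 with rfl | rfl; exacts [hcr.1, hcr.2.1]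
    have h2 : c.pb s ≠ a := by rcases h.2 with rfl | rfl; exacts [hcr.2.2.1, hcr.2.2.2]
    rw [if_neg hst, count_sing_ne h1, count_sing_ne h2]
    rcases Nat.lt_or_ge s t with hlt | hge
    · rw [if_pos hlt, if_neg (by omega)]
    · rw [if_neg (by omega), if_pos (by omega)]

lemma Good.count_rnd_B (hc : c.Good) {x : V} (hx : x ∈ c.bs) {s : ℕ} (hs : s < c.K) :
    (c.rnd s).count x = 1 := by
  have h1 : c.pa s ≠ x := hc.ne_of_mem_bs (c.mem_pa_AS hs) hx
  have h2 : c.pb s ≠ x := hc.ne_of_mem_bs (c.mem_pb_AS hs) hx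
  have hL : (c.Lp s).count x = 0 :=
    List.count_eq_zero.mpr fun hm => hc.disjAb x (c.mem_Lp_AS hm) hx
  have hR : (c.Rp s).count x = 0 :=
    List.count_eq_zero.mpr fun hm => hc.disjAb x (c.mem_Rp_AS hm) hx
  have hB := hc.count_Bp hx s
  rw [Bp, List.count_append, List.count_append, List.count_append] at hB
  rw [rnd]
  simp only [List.count_append]
  rw [hL, hR, count_sing_ne h1, count_sing_ne h2]
  omega

lemma Good.count_SS_A (hc : c.Good) {a : V} {t : ℕ} (h : c.isIdx a t) :
    ∀ r u, u + r = c.K → (c.SS u).count a = r + (if u ≤ t then 1 else 0) := by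
  intro r
  induction r with
  | zero =>
    intro u hu
    rw [c.SS_eq_nil (by omega), if_neg (by have := h.1; omega)]
    rfl
  | succ k ih =>
    intro u hu
    rw [c.SS_succ (by omega), List.count_append, hc.count_rnd_A h (by omega),
      ih (u+1) (by omega)]
    by_cases hut : u = t
    · subst hut
      rw [if_pos rfl, if_neg (by omega), if_pos le_rfl]
      omega
    · rw [if_neg hut]
      by_cases hut2 : u ≤ t
      · rw [if_pos (by omega), if_pos hut2]
        omega
      · rw [if_neg (by omega), if_neg hut2]
        omega

lemma Good.count_SS_B (hc : c.Good) {x : V} (hx : x ∈ c.bs) :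
    ∀ r u, u + r = c.K → (c.SS u).count x = r := by
  intro r
  induction r with
  | zero =>
    intro u hu
    rw [c.SS_eq_nil (by omega)]
    rfl
  | succ k ih =>
    intro u hu
    rw [c.SS_succ (by omega), List.count_append, hc.count_rnd_B hx (by omega),
      ih (u+1) (by omega)]
    omega

lemma Good.count_wd (hc : c.Good) {v : V} (hv : v ∈ c.AS ++ c.bs) :
    c.wd.count v = c.K + 1 := by
  rw [wd, List.count_append, FF, List.count_reverse]
  rcases List.mem_append.mp hv with hv | hv
  · obtain ⟨t, ht⟩ := c.mem_AS_index hv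
    rw [hc.count_SS_A ht c.K 0 (by omega), if_pos (Nat.zero_le t), hc.count_Bp_zero hv 0]
  · rw [hc.count_SS_B hv c.K 0 (by omega), hc.count_Bp hv 0]

lemma Good.mem_wd (hc : c.Good) {v : V} (hv : v ∈ c.AS ++ c.bs) : v ∈ c.wd := by
  have := hc.count_wd hv
  have hpos : 0 < c.wd.count v := by omega
  exact List.count_pos_iff.mp hpos

theorem Good.represents (hc : c.Good) (hcov : ∀ v : V, v ∈ c.AS ++ c.bs) :
    Represents c.G c.wd ∧ IsUniformWord c.wd (c.K + 1) := by
  refine ⟨⟨fun v => hc.mem_wd (hcov v), ?_⟩, fun v => hc.count_wd (hcov v)⟩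
  intro u v huv
  rcases List.mem_append.mp (hcov u) with huA | hub <;>
    rcases List.mem_append.mp (hcov v) with hvA | hvb
  · constructor
    · intro hadj; exact absurd hadj (hc.2.2.1 u huA v hvA)
    · intro halt
      exfalso
      obtain ⟨t, ht⟩ := c.mem_AS_index huA
      by_cases hv1 : v = c.pa t
      · subst hv1
        rcases ht.2 with hu1 | hu1
        · exact huv hu1
        · subst hu1
          exact hc.kill_same_pair ht.1 ((alternate_comm _ _ _).mp halt)
      · by_cases hv2 : v = c.pb t
        · subst hv2
          rcases ht.2 with hu1 | hu1
          · subst hu1; exact hc.kill_same_pair ht.1 halt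
          · exact huv hu1
        · exact hc.kill_cross ht hvA hv1 hv2 halt
  · obtain ⟨t, ht⟩ := c.mem_AS_index huA
    constructor
    · exact fun hadj => hc.alternate_of_adj ht hvb hadj
    · intro halt
      by_contra hnadj
      exact hc.kill_AB ht hvb hnadj halt
  · obtain ⟨t, ht⟩ := c.mem_AS_index hvA
    rw [c.G.adj_comm, alternate_comm]
    constructor
    · exact fun hadj => hc.alternate_of_adj ht hub hadj
    · intro halt
      by_contra hnadj
      exact hc.kill_AB ht hub hnadj halt
  · constructor
    · intro hadj; exact absurd hadj (hc.2.2.2 u hub v hvb)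
    · intro halt; exact absurd halt (hc.kill_BB hub hvb huv)

end Ctx

def pairUp {V : Type*} : List V → List (V × V)
  | x :: y :: r => (x, y) :: pairUp r
  | _ => []

lemma pairUp_flat {V : Type*} : ∀ l : List V, l.length % 2 = 0 →
    (pairUp l).flatMap Ctx.f2 = l
  | [], _ => rfl
  | [x], h => by simp at h
  | x :: y :: r, h => by
    have hr : r.length % 2 = 0 := by
      simp only [List.length_cons] at h
      omega
    show ((x, y) :: pairUp r).flatMap Ctx.f2 = x :: y :: r
    rw [List.flatMap_cons, pairUp_flat r hr]
    rfl

lemma pairUp_len {V : Type*} : ∀ l : List V, (pairUp l).length = l.length / 2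
  | [] => by simp [pairUp]
  | [x] => by simp [pairUp]
  | x :: y :: r => by
    show ((x, y) :: pairUp r).length = (x :: y :: r).length / 2
    rw [List.length_cons, pairUp_len r]
    simp only [List.length_cons]
    omega

theorem representable_of_bipartition {V : Type*} [Fintype V] [DecidableEq V]
    (G : SimpleGraph V) (A B : Finset V)
    (hUnion : A ∪ B = Finset.univ) (hDisj : Disjoint A B)
    (hEdge : ∀ a b : V, G.Adj a b → (a ∈ A ∧ b ∈ B) ∨ (a ∈ B ∧ b ∈ A))
    {K : ℕ} (hK : 2 ≤ K) (hA : A.card = 2 * K) :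
    Representable G (K + 1) := by
  have hAne : A.toList ≠ [] := by
    intro h
    have := Finset.length_toList A
    rw [h] at this
    simp at this
    omega
  set d0 : V := A.toList.head hAne with hd0
  set c : Ctx V := ⟨G, pairUp A.toList, B.toList, (d0, d0)⟩ with hcdef
  have hlenA : A.toList.length = 2 * K := by rw [Finset.length_toList, hA]
  have hAS : c.AS = A.toList := by
    show (pairUp A.toList).flatMap Ctx.f2 = A.toList
    exact pairUp_flat _ (by omega)
  have hKc : c.K = K := by
    show (pairUp A.toList).length = K
    rw [pairUp_len, hlenA]
    omega
  have hnoAA : ∀ u ∈ A, ∀ v ∈ A, ¬ G.Adj u v := by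
    intro u hu v hv hadj
    rcases hEdge u v hadj with ⟨h1, h2⟩ | ⟨h1, h2⟩
    · exact Finset.disjoint_left.mp hDisj hv h2
    · exact Finset.disjoint_left.mp hDisj hu h1
  have hnoBB : ∀ u ∈ B, ∀ v ∈ B, ¬ G.Adj u v := by
    intro u hu v hv hadj
    rcases hEdge u v hadj with ⟨h1, h2⟩ | ⟨h1, h2⟩
    · exact Finset.disjoint_left.mp hDisj h1 hu
    · exact Finset.disjoint_left.mp hDisj h2 hv
  have hgood : c.Good := by
    refine ⟨?_, ?_, ?_, ?_⟩
    · rw [hAS]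
      show (A.toList ++ B.toList).Nodup
      apply List.Nodup.append (Finset.nodup_toList A) (Finset.nodup_toList B)
      intro x hx hx'
      rw [Finset.mem_toList] at hx hx'
      exact Finset.disjoint_left.mp hDisj hx hx'
    · rw [hKc]; exact hK
    · intro u hu v hv
      rw [hAS, Finset.mem_toList] at hu hv
      exact hnoAA u hu v hv
    · intro u hu v hv
      have hu' : u ∈ B := by rwa [← Finset.mem_toList]
      have hv' : v ∈ B := by rwa [← Finset.mem_toList]
      exact hnoBB u hu' v hv'
  have hcov : ∀ v : V, v ∈ c.AS ++ c.bs := by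
    intro v
    rw [List.mem_append, hAS]
    have : v ∈ A ∪ B := by rw [hUnion]; exact Finset.mem_univ v
    rcases Finset.mem_union.mp this with h | h
    · left; rwa [Finset.mem_toList]
    · right
      show v ∈ B.toList
      rwa [Finset.mem_toList]
  obtain ⟨hrep, hunif⟩ := hgood.represents hcov
  exact ⟨c.wd, hrep, by rwa [hKc] at hunif⟩

set_option maxHeartbeats 1000000 in
lemma p5_represents {V : Type*} [DecidableEq V] (G : SimpleGraph V)
    (a a' b1 b2 b3 : V)
    (cover : ∀ v : V, v = a ∨ v = a' ∨ v = b1 ∨ v = b2 ∨ v = b3)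
    (n1 : a ≠ a') (n2 : a ≠ b1) (n3 : a ≠ b2) (n4 : a ≠ b3)
    (n5 : a' ≠ b1) (n6 : a' ≠ b2) (n7 : a' ≠ b3)
    (n8 : b1 ≠ b2) (n9 : b1 ≠ b3) (n10 : b2 ≠ b3)
    (e1 : G.Adj a b1) (e2 : G.Adj a b3) (e3 : G.Adj a' b3) (e4 : G.Adj a' b2)
    (x1 : ¬G.Adj a a') (x2 : ¬G.Adj a b2) (x3 : ¬G.Adj a' b1)
    (x4 : ¬G.Adj b1 b2) (x5 : ¬G.Adj b1 b3) (x6 : ¬G.Adj b2 b3) :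
    Represents G [b1, a, b1, b3, a, a', b3, b2, a', b2] ∧
      IsUniformWord [b1, a, b1, b3, a, a', b3, b2, a', b2] 2 := by

  set w : List V := [b1, a, b1, b3, a, a', b3, b2, a', b2] with hw
  have symmAlt : ∀ {x y : V}, Alternate w x y → Alternate w y x :=
    fun h => (alternate_comm w _ _).mp h
  have symmNAlt : ∀ {x y : V}, ¬Alternate w x y → ¬Alternate w y x :=
    fun h h2 => h ((alternate_comm w _ _).mp h2)
  have A1 : Alternate w a b1 := by
    unfold Alternate
    simp [hw, List.filter_cons, n1, n2, n3, n4, n5, n6, n7, n8, n9, n10,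
      n1.symm, n2.symm, n3.symm, n4.symm, n5.symm, n6.symm, n7.symm, n8.symm,
      n9.symm, n10.symm, List.Chain', List.isChain_cons_cons]
  have A2 : Alternate w a b3 := by
    unfold Alternate
    simp [hw, List.filter_cons, n1, n2, n3, n4, n5, n6, n7, n8, n9, n10,
      n1.symm, n2.symm, n3.symm, n4.symm, n5.symm, n6.symm, n7.symm, n8.symm,
      n9.symm, n10.symm, List.Chain', List.isChain_cons_cons]
  have A3 : Alternate w a' b3 := by
    unfold Alternate
    simp [hw, List.filter_cons, n1, n2, n3, n4, n5, n6, n7, n8, n9, n10,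
      n1.symm, n2.symm, n3.symm, n4.symm, n5.symm, n6.symm, n7.symm, n8.symm,
      n9.symm, n10.symm, List.Chain', List.isChain_cons_cons]
  have A4 : Alternate w a' b2 := by
    unfold Alternate
    simp [hw, List.filter_cons, n1, n2, n3, n4, n5, n6, n7, n8, n9, n10,
      n1.symm, n2.symm, n3.symm, n4.symm, n5.symm, n6.symm, n7.symm, n8.symm,
      n9.symm, n10.symm, List.Chain', List.isChain_cons_cons]
  have N1 : ¬Alternate w a a' := by
    unfold Alternate
    simp [hw, List.filter_cons, n1, n2, n3, n4, n5, n6, n7, n8, n9, n10,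
      n1.symm, n2.symm, n3.symm, n4.symm, n5.symm, n6.symm, n7.symm, n8.symm,
      n9.symm, n10.symm, List.Chain', List.isChain_cons_cons]
  have N2 : ¬Alternate w a b2 := by
    unfold Alternate
    simp [hw, List.filter_cons, n1, n2, n3, n4, n5, n6, n7, n8, n9, n10,
      n1.symm, n2.symm, n3.symm, n4.symm, n5.symm, n6.symm, n7.symm, n8.symm,
      n9.symm, n10.symm, List.Chain', List.isChain_cons_cons]
  have N3 : ¬Alternate w a' b1 := by
    unfold Alternate
    simp [hw, List.filter_cons, n1, n2, n3, n4, n5, n6, n7, n8, n9, n10,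
      n1.symm, n2.symm, n3.symm, n4.symm, n5.symm, n6.symm, n7.symm, n8.symm,
      n9.symm, n10.symm, List.Chain', List.isChain_cons_cons]
  have N4 : ¬Alternate w b1 b2 := by
    unfold Alternate
    simp [hw, List.filter_cons, n1, n2, n3, n4, n5, n6, n7, n8, n9, n10,
      n1.symm, n2.symm, n3.symm, n4.symm, n5.symm, n6.symm, n7.symm, n8.symm,
      n9.symm, n10.symm, List.Chain', List.isChain_cons_cons]
  have N5 : ¬Alternate w b1 b3 := by
    unfold Alternate
    simp [hw, List.filter_cons, n1, n2, n3, n4, n5, n6, n7, n8, n9, n10,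
      n1.symm, n2.symm, n3.symm, n4.symm, n5.symm, n6.symm, n7.symm, n8.symm,
      n9.symm, n10.symm, List.Chain', List.isChain_cons_cons]
  have N6 : ¬Alternate w b2 b3 := by
    unfold Alternate
    simp [hw, List.filter_cons, n1, n2, n3, n4, n5, n6, n7, n8, n9, n10,
      n1.symm, n2.symm, n3.symm, n4.symm, n5.symm, n6.symm, n7.symm, n8.symm,
      n9.symm, n10.symm, List.Chain', List.isChain_cons_cons]
  refine ⟨⟨?_, ?_⟩, ?_⟩
  · intro v
    rcases cover v with rfl | rfl | rfl | rfl | rfl <;> simp [hw]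
  · intro u v huv
    rcases cover u with rfl | rfl | rfl | rfl | rfl <;>
      rcases cover v with rfl | rfl | rfl | rfl | rfl <;>
      first
        | exact absurd rfl huv
        | exact iff_of_true e1 A1
        | exact iff_of_true e1.symm (symmAlt A1)
        | exact iff_of_true e2 A2
        | exact iff_of_true e2.symm (symmAlt A2)
        | exact iff_of_true e3 A3
        | exact iff_of_true e3.symm (symmAlt A3)
        | exact iff_of_true e4 A4
        | exact iff_of_true e4.symm (symmAlt A4)
        | exact iff_of_false x1 N1
        | exact iff_of_false (fun h => x1 h.symm) (symmNAlt N1)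
        | exact iff_of_false x2 N2
        | exact iff_of_false (fun h => x2 h.symm) (symmNAlt N2)
        | exact iff_of_false x3 N3
        | exact iff_of_false (fun h => x3 h.symm) (symmNAlt N3)
        | exact iff_of_false x4 N4
        | exact iff_of_false (fun h => x4 h.symm) (symmNAlt N4)
        | exact iff_of_false x5 N5
        | exact iff_of_false (fun h => x5 h.symm) (symmNAlt N5)
        | exact iff_of_false x6 N6
        | exact iff_of_false (fun h => x6 h.symm) (symmNAlt N6)
  · intro v
    rcases cover v with rfl | rfl | rfl | rfl | rfl <;>
      simp [hw, List.count_cons, n1, n2, n3, n4, n5, n6, n7, n8, n9, n10,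
        n1.symm, n2.symm, n3.symm, n4.symm, n5.symm, n6.symm, n7.symm, n8.symm,
        n9.symm, n10.symm]

lemma neighbor_exists {V : Type*} [Fintype V] [DecidableEq V] (G : SimpleGraph V)
    (hconn : G.Connected) (hcard : 1 < Fintype.card V) (v : V) : ∃ u, G.Adj v u := by
  obtain ⟨u, hu⟩ := Fintype.exists_ne_of_one_lt_card hcard v
  obtain ⟨p⟩ := hconn.preconnected v u
  cases p with
  | nil => exact absurd rfl hu
  | cons h _ => exact ⟨_, h⟩

lemma m2_card_le (V : Type*) [Fintype V] [DecidableEq V] (G : SimpleGraph V)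
    (A B : Finset V) (hbip : IsBipartition G A B) (hconn : G.Connected)
    (hred : Reduced G) (hA : A.card = 2) :
    B.card ≤ 3 ∧ (B.card = 3 → Representable G 2) := by
  classical
  obtain ⟨hUnion, hDisj, hEdge⟩ := hbip
  obtain ⟨a, a', hne, hAeq⟩ := Finset.card_eq_two.mp hA
  have hcard2 : 1 < Fintype.card V := by
    have h1 : A.card ≤ Fintype.card V := by
      rw [← Finset.card_univ]
      exact Finset.card_le_univ A
    omega
  have hnb := neighbor_exists G hconn hcard2
  have haA : a ∈ A := by rw [hAeq]; simp
  have ha'A : a' ∈ A := by rw [hAeq]; simp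
  -- every B vertex is adjacent to a or a'
  have hBadj : ∀ b ∈ B, G.Adj a b ∨ G.Adj a' b := by
    intro b hb
    obtain ⟨u, hu⟩ := hnb b
    have huA : u ∈ A := by
      rcases hEdge b u hu with ⟨h1, _⟩ | ⟨_, h2⟩
      · exact absurd hb (Finset.disjoint_left.mp hDisj h1)
      · exact h2
    rw [hAeq] at huA
    rcases Finset.mem_insert.mp huA with rfl | huA
    · exact Or.inl hu.symm
    · rw [Finset.mem_singleton] at huA
      subst huA
      exact Or.inr hu.symm
  -- neighbours of B vertices lie in {a, a'}
  have hNsub : ∀ b ∈ B, ∀ x, G.Adj b x → (x = a ∨ x = a') := by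
    intro b hb x hadj
    have hxA : x ∈ A := by
      rcases hEdge b x hadj with ⟨h1, _⟩ | ⟨_, h2⟩
      · exact absurd hb (Finset.disjoint_left.mp hDisj h1)
      · exact h2
    rw [hAeq] at hxA
    rcases Finset.mem_insert.mp hxA with rfl | hxA
    · exact Or.inl rfl
    · rw [Finset.mem_singleton] at hxA
      exact Or.inr hxA
  have hsame : ∀ b ∈ B, ∀ b' ∈ B, (G.Adj a b ↔ G.Adj a b') →
      (G.Adj a' b ↔ G.Adj a' b') → b = b' := by
    intro b hb b' hb' h1 h2
    apply hred
    ext x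
    simp only [SimpleGraph.mem_neighborSet]
    constructor
    · intro h
      rcases hNsub b hb x h with rfl | rfl
      · exact (h1.mp h.symm).symm
      · exact (h2.mp h.symm).symm
    · intro h
      rcases hNsub b' hb' x h with rfl | rfl
      · exact (h1.mpr h.symm).symm
      · exact (h2.mpr h.symm).symm
  set S1 := B.filter (fun b => G.Adj a b ∧ ¬ G.Adj a' b) with hS1
  set S2 := B.filter (fun b => ¬ G.Adj a b ∧ G.Adj a' b) with hS2
  set S3 := B.filter (fun b => G.Adj a b ∧ G.Adj a' b) with hS3
  have hBsub : B ⊆ S1 ∪ S2 ∪ S3 := by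
    intro b hb
    by_cases h1 : G.Adj a b <;> by_cases h2 : G.Adj a' b
    · exact Finset.mem_union_right _ (Finset.mem_filter.mpr ⟨hb, h1, h2⟩)
    · exact Finset.mem_union_left _
        (Finset.mem_union_left _ (Finset.mem_filter.mpr ⟨hb, h1, h2⟩))
    · exact Finset.mem_union_left _
        (Finset.mem_union_right _ (Finset.mem_filter.mpr ⟨hb, h1, h2⟩))
    · rcases hBadj b hb with h | h
      · exact absurd h h1
      · exact absurd h h2
  have hc1 : S1.card ≤ 1 := by
    apply Finset.card_le_one.mpr
    intro b hb b' hb'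
    obtain ⟨hbB, hb1, hb2⟩ := Finset.mem_filter.mp hb
    obtain ⟨hb'B, hb'1, hb'2⟩ := Finset.mem_filter.mp hb'
    exact hsame b hbB b' hb'B (iff_of_true hb1 hb'1) (iff_of_false hb2 hb'2)
  have hc2 : S2.card ≤ 1 := by
    apply Finset.card_le_one.mpr
    intro b hb b' hb'
    obtain ⟨hbB, hb1, hb2⟩ := Finset.mem_filter.mp hb
    obtain ⟨hb'B, hb'1, hb'2⟩ := Finset.mem_filter.mp hb'
    exact hsame b hbB b' hb'B (iff_of_false hb1 hb'1) (iff_of_true hb2 hb'2)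
  have hc3 : S3.card ≤ 1 := by
    apply Finset.card_le_one.mpr
    intro b hb b' hb'
    obtain ⟨hbB, hb1, hb2⟩ := Finset.mem_filter.mp hb
    obtain ⟨hb'B, hb'1, hb'2⟩ := Finset.mem_filter.mp hb'
    exact hsame b hbB b' hb'B (iff_of_true hb1 hb'1) (iff_of_true hb2 hb'2)
  have hble : B.card ≤ 3 := by
    have h1 := Finset.card_le_card hBsub
    have h2 := Finset.card_union_le (S1 ∪ S2) S3
    have h3 := Finset.card_union_le S1 S2
    omega
  refine ⟨hble, ?_⟩
  intro hB3
  have h1 := Finset.card_le_card hBsub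
  have h2 := Finset.card_union_le (S1 ∪ S2) S3
  have h3 := Finset.card_union_le S1 S2
  have hc1' : S1.card = 1 := by omega
  have hc2' : S2.card = 1 := by omega
  have hc3' : S3.card = 1 := by omega
  obtain ⟨b1, hb1⟩ := Finset.card_eq_one.mp hc1'
  obtain ⟨b2, hb2⟩ := Finset.card_eq_one.mp hc2'
  obtain ⟨b3, hb3⟩ := Finset.card_eq_one.mp hc3'
  have hb1m : b1 ∈ S1 := by rw [hb1]; simp
  have hb2m : b2 ∈ S2 := by rw [hb2]; simp
  have hb3m : b3 ∈ S3 := by rw [hb3]; simp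
  obtain ⟨hb1B, e1, x3⟩ := Finset.mem_filter.mp hb1m
  obtain ⟨hb2B, x2, e4⟩ := Finset.mem_filter.mp hb2m
  obtain ⟨hb3B, e2, e3⟩ := Finset.mem_filter.mp hb3m
  have hnoAA : ∀ u ∈ A, ∀ v ∈ A, ¬ G.Adj u v := by
    intro u hu v hv hadj
    rcases hEdge u v hadj with ⟨h1', h2'⟩ | ⟨h1', h2'⟩
    · exact Finset.disjoint_left.mp hDisj hv h2'
    · exact Finset.disjoint_left.mp hDisj hu h1'
  have hnoBB : ∀ u ∈ B, ∀ v ∈ B, ¬ G.Adj u v := by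
    intro u hu v hv hadj
    rcases hEdge u v hadj with ⟨h1', h2'⟩ | ⟨h1', h2'⟩
    · exact Finset.disjoint_left.mp hDisj h1' hu
    · exact Finset.disjoint_left.mp hDisj h2' hv
  have hAB : ∀ x ∈ A, ∀ y ∈ B, x ≠ y :=
    fun x hx y hy he => Finset.disjoint_left.mp hDisj hx (he ▸ hy)
  have cover : ∀ v : V, v = a ∨ v = a' ∨ v = b1 ∨ v = b2 ∨ v = b3 := by
    intro v
    have : v ∈ A ∪ B := by rw [hUnion]; exact Finset.mem_univ v
    rcases Finset.mem_union.mp this with h | h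
    · rw [hAeq] at h
      rcases Finset.mem_insert.mp h with rfl | h
      · exact Or.inl rfl
      · rw [Finset.mem_singleton] at h
        exact Or.inr (Or.inl h)
    · have := hBsub h
      rcases Finset.mem_union.mp this with h' | h'
      · rcases Finset.mem_union.mp h' with h'' | h''
        · rw [hb1] at h''
          exact Or.inr (Or.inr (Or.inl (Finset.mem_singleton.mp h'')))
        · rw [hb2] at h''
          exact Or.inr (Or.inr (Or.inr (Or.inl (Finset.mem_singleton.mp h''))))
      · rw [hb3] at h'
        exact Or.inr (Or.inr (Or.inr (Or.inr (Finset.mem_singleton.mp h'))))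
  obtain ⟨hrep, hunif⟩ := p5_represents G a a' b1 b2 b3 cover
    hne (hAB a haA b1 hb1B) (hAB a haA b2 hb2B) (hAB a haA b3 hb3B)
    (hAB a' ha'A b1 hb1B) (hAB a' ha'A b2 hb2B) (hAB a' ha'A b3 hb3B)
    (fun he => x2 (by rw [← he]; exact e1)) (fun he => x3 (by rw [he]; exact e3))
    (fun he => x2 (by rw [he]; exact e2))
    e1 e2 e3 e4
    (hnoAA a haA a' ha'A) x2 x3
    (hnoBB b1 hb1B b2 hb2B) (hnoBB b1 hb1B b3 hb3B) (hnoBB b2 hb2B b3 hb3B)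
  exact ⟨_, hrep, hunif⟩

end WordRepAux

open WordRepAux in
theorem bipartite_repNumber_le_of_m_even_n_close
    {V : Type*} [Fintype V] [DecidableEq V] (G : SimpleGraph V)
    (A B : Finset V) (m n : ℕ)
    (hbip : IsBipartition G A B) (hconn : G.Connected) (hred : Reduced G)
    (hA : A.card = m) (hB : B.card = n)
    (hm : 1 ≤ m) (hmn : m ≤ n) (hmeven : Even m) (hn : n = m + 1 ∨ n = m + 2) :
    repNumber G ≤ (m + n + 3) / 4 := by
  obtain ⟨hUnion, hDisj, hEdge⟩ := hbip
  obtain ⟨K, hK⟩ := hmeven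
  rcases Nat.lt_or_ge K 2 with hK2 | hK2
  · have hm2 : m = 2 := by omega
    have h2 := m2_card_le V G A B ⟨hUnion, hDisj, hEdge⟩ hconn hred (by omega)
    have hble := h2.1
    have hn3 : n = 3 := by rcases hn with h | h <;> omega
    have hrep : Representable G 2 := h2.2 (by omega)
    have hle : repNumber G ≤ 2 := Nat.sInf_le hrep
    exact le_trans hle (by omega)
  · have hrep : Representable G (K+1) :=
      representable_of_bipartition G A B hUnion hDisj hEdge hK2 (by omega)
    have hle : repNumber G ≤ K + 1 := Nat.sInf_le hrep
    have hbound : K + 1 ≤ (m + n + 3) / 4 := by rcases hn with h | h <;> omega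
    exact le_trans hle hbound
end
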